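/- arXiv:1008.5383 — 6 statements merged into one kernel-verified Lean document; each statement's English description precedes it below -/
import Mathlib

section
/- Let A be an m×n real matrix of rank r, and let A^{∘h} denote the h-fold entrywise (Hadamard) product of A with itself. Then rank(A^{∘h}) ≤ C(r+h-1, h), the binomial coefficient. -/
open Matrix


/-- The Hadamard (entrywise) `h`-th power of a matrix. -/
def hadamardPow {m n : Type*} (A : Matrix m n ℝ) (h : ℕ) : Matrix m n ℝ :=
  Matrix.of fun i j => (A i j) ^ h

lemma matrix_rank_add_le {m n : ℕ} (A B : Matrix (Fin m) (Fin n) ℝ) :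
    (A + B).rank ≤ A.rank + B.rank := by
  classical
  rw [Matrix.rank, Matrix.rank, Matrix.rank, Matrix.mulVecLin_add]
  have h1 : LinearMap.range (A.mulVecLin + B.mulVecLin) ≤
      LinearMap.range A.mulVecLin ⊔ LinearMap.range B.mulVecLin := by
    rintro x ⟨y, rfl⟩
    exact Submodule.mem_sup.2 ⟨A.mulVecLin y, ⟨y, rfl⟩, B.mulVecLin y, ⟨y, rfl⟩, rfl⟩
  exact (Submodule.finrank_mono h1).trans
    (Submodule.finrank_add_le_finrank_add_finrank _ _)

lemma matrix_rank_sum_le {ι : Type*} (s : Finset ι) {m n : ℕ}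
    (f : ι → Matrix (Fin m) (Fin n) ℝ) :
    (∑ i ∈ s, f i).rank ≤ ∑ i ∈ s, (f i).rank := by
  classical
  induction s using Finset.cons_induction with
  | empty => simp [Matrix.rank_zero]
  | cons a s ha ih =>
    rw [Finset.sum_cons, Finset.sum_cons]
    exact (matrix_rank_add_le _ _).trans (by omega)

lemma matrix_rank_smul_le {m n : ℕ} (c : ℝ) (M : Matrix (Fin m) (Fin n) ℝ) :
    (c • M).rank ≤ M.rank := by
  have : c • M = (c • (1 : Matrix (Fin m) (Fin m) ℝ)) * M := by
    rw [Matrix.smul_mul, Matrix.one_mul]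
  rw [this]
  exact Matrix.rank_mul_le_right _ _

lemma matrix_rank_vecMulVec_le {m n : ℕ} (u : Fin m → ℝ) (v : Fin n → ℝ) :
    (Matrix.vecMulVec u v).rank ≤ 1 := by
  rw [Matrix.vecMulVec_eq (Fin 1)]
  exact (Matrix.rank_mul_le_left _ _).trans
    ((Matrix.rank_le_card_width _).trans (by simp))

lemma matrix_exists_factorization {m n : ℕ} (A : Matrix (Fin m) (Fin n) ℝ) :
    ∃ (B : Matrix (Fin m) (Fin A.rank) ℝ) (C : Matrix (Fin A.rank) (Fin n) ℝ),
      A = B * C := by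
  classical
  set V : Submodule ℝ (Fin m → ℝ) := Submodule.span ℝ (Set.range Aᵀ) with hV
  have hfd : FiniteDimensional ℝ V := FiniteDimensional.span_of_finite ℝ (Set.finite_range _)
  have hr : A.rank = Module.finrank ℝ V := Matrix.rank_eq_finrank_span_cols A
  let b : Module.Basis (Fin A.rank) ℝ V :=
    (Module.finBasis ℝ V).reindex (finCongr hr.symm)
  have hmem : ∀ j, Aᵀ j ∈ V := fun j => Submodule.subset_span ⟨j, rfl⟩
  refine ⟨fun i k => (b k : Fin m → ℝ) i,
     fun k j => b.repr ⟨Aᵀ j, hmem j⟩ k, ?_⟩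
  ext i j
  have hs := b.sum_repr ⟨Aᵀ j, hmem j⟩
  have := congrArg (fun x : V => (x : Fin m → ℝ) i) hs
  simp only [Submodule.coe_sum, SetLike.val_smul, Finset.sum_apply,
    Pi.smul_apply, smul_eq_mul] at this
  show A i j = ∑ k, (b k : Fin m → ℝ) i * b.repr ⟨Aᵀ j, hmem j⟩ k
  rw [show A i j = Aᵀ j i from rfl, ← this]
  exact Finset.sum_congr rfl fun k _ => mul_comm _ _

/-- The rank of the `h`-fold Hadamard power of a real matrix of rank `r` is at most
`C(r + h - 1, h)`. -/
theorem rank_hadamardPow_le (m n : ℕ) (A : Matrix (Fin m) (Fin n) ℝ) (h : ℕ) :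
    (hadamardPow A h).rank ≤ (A.rank + h - 1).choose h := by
  classical
  set r := A.rank with hr
  obtain ⟨B, C, hBC⟩ := matrix_exists_factorization A
  have key : hadamardPow A h = ∑ k : Sym (Fin r) h,
      (((k : Multiset (Fin r)).countPerms : ℝ) •
        Matrix.vecMulVec (fun i => ((k : Multiset (Fin r)).map fun t => B i t).prod)
          (fun j => ((k : Multiset (Fin r)).map fun t => C t j).prod)) := by
    ext i j
    have hA : A i j = ∑ t : Fin r, B i t * C t j := by
      rw [hBC, Matrix.mul_apply]
    simp only [hadamardPow, Matrix.of_apply, hA, Matrix.sum_apply, Pi.smul_apply,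
      smul_eq_mul, Matrix.vecMulVec_apply]
    rw [Finset.sum_pow, Finset.sym_univ]
    refine Finset.sum_congr rfl fun k _ => ?_
    simp [Matrix.smul_apply, Matrix.vecMulVec_apply, Multiset.prod_map_mul, mul_assoc]
    exact Or.inl (Or.inl rfl)
  rw [key]
  calc (∑ k : Sym (Fin r) h, (((k : Multiset (Fin r)).countPerms : ℝ) •
        Matrix.vecMulVec (fun i => ((k : Multiset (Fin r)).map fun t => B i t).prod)
          (fun j => ((k : Multiset (Fin r)).map fun t => C t j).prod))).rank
      ≤ ∑ k : Sym (Fin r) h, (((k : Multiset (Fin r)).countPerms : ℝ) •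
        Matrix.vecMulVec (fun i => ((k : Multiset (Fin r)).map fun t => B i t).prod)
          (fun j => ((k : Multiset (Fin r)).map fun t => C t j).prod)).rank :=
      matrix_rank_sum_le _ _
    _ ≤ ∑ _k : Sym (Fin r) h, 1 :=
      Finset.sum_le_sum fun k _ =>
        (matrix_rank_smul_le _ _).trans (matrix_rank_vecMulVec_le _ _)
    _ = Fintype.card (Sym (Fin r) h) := by simp
    _ = (r + h - 1).choose h := by
      rw [Sym.card_sym_eq_choose, Fintype.card_fin]
end

section
/- Let A be a real matrix of rank r. If for some positive integer h the Hadamard power A^{∘h} has rank exactly C(r+h-1, h), then for every j with 1 ≤ j ≤ h, the Hadamard power A^{∘j} has rank exactly C(r+j-1, j). -/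
namespace HadamardPowAux

open Matrix Module

noncomputable section

variable {m n r : ℕ} {ι : Type*}

/-- rank equals number of columns iff `mulVecLin` is injective. -/
lemma rank_eq_card_iff {N : Type*} [Fintype N] (P : Matrix (Fin m) N ℝ) :
    P.rank = Fintype.card N ↔ Function.Injective P.mulVecLin := by
  constructor
  · intro hr
    rw [← LinearMap.ker_eq_bot, ← Submodule.finrank_eq_zero (R := ℝ)]
    have h2 := P.mulVecLin.finrank_range_add_finrank_ker
    rw [Module.finrank_fintype_fun_eq_card] at h2
    unfold Matrix.rank at hr
    omega
  · intro hinj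
    unfold Matrix.rank
    rw [LinearMap.finrank_range_of_inj hinj, Module.finrank_fintype_fun_eq_card]

/-- injectivity of `mulVecLin` iff the columns are linearly independent. -/
lemma inj_iff_linIndep {N : Type*} [Fintype N] (P : Matrix (Fin m) N ℝ) :
    Function.Injective P.mulVecLin ↔ LinearIndependent ℝ Pᵀ := by
  rw [← LinearMap.ker_eq_bot, LinearMap.ker_eq_bot']
  refine Iff.trans ?_ Fintype.linearIndependent_iff.symm
  constructor
  · intro h g hg
    have : P.mulVecLin g = 0 := by
      ext i
      have := congrFun hg i
      simpa [Matrix.mulVecLin, Matrix.mulVec, dotProduct, Finset.sum_apply,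
        mul_comm] using this
    intro s; exact congrFun (h g this) s
  · intro h c hc
    funext s
    refine h c ?_ s
    funext i
    have := congrFun hc i
    simpa [Matrix.mulVecLin, Matrix.mulVec, dotProduct, Finset.sum_apply,
      mul_comm] using this

/-- family of entrywise products of rows indexed by multisets of size `j` -/
def prodFam (w : Fin r → ι → ℝ) (j : ℕ) : Sym (Fin r) j → (ι → ℝ) :=
  fun s i => (s.1.map (fun k => w k i)).prod

lemma linIndep_smul_iff {N : Type*} [Fintype N] (c : N → ℝ) (hc : ∀ s, c s ≠ 0)
    (v : N → ι → ℝ) :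
    LinearIndependent ℝ (fun s => c s • v s) ↔ LinearIndependent ℝ v := by
  rw [Fintype.linearIndependent_iff, Fintype.linearIndependent_iff]
  constructor
  · intro h g hg s
    have := h (fun s => g s / c s) ?_ s
    · field_simp at this; exact (div_eq_zero_iff.mp this).resolve_right (hc s)
    · rw [← hg]; apply Finset.sum_congr rfl; intro s _
      rw [smul_smul, div_mul_cancel₀ _ (hc s)]
  · intro h g hg s
    have := h (fun s => g s * c s) ?_ s
    · rcases mul_eq_zero.mp this with h' | h'
      · exact h'
      · exact absurd h' (hc s)
    · rw [← hg]; apply Finset.sum_congr rfl; intro s _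
      rw [smul_smul]

lemma isEmpty_sym (j : ℕ) (hj : 1 ≤ j) (hr : r = 0) : IsEmpty (Sym (Fin r) j) := by
  subst hr
  constructor
  intro s
  have h2 : Multiset.card s.1 = j := s.2
  have hne : s.1 ≠ 0 := by intro h0; rw [h0] at h2; simp at h2; omega
  obtain ⟨x, -⟩ := Multiset.exists_mem_of_ne_zero hne
  exact x.elim0

/-- the key transfer: linear independence of the degree-`h` products implies that of the
degree-`j` products, for `1 ≤ j ≤ h`. -/
lemma linIndep_down (w : Fin r → ι → ℝ) {j h : ℕ} (hj : 1 ≤ j) (hjh : j ≤ h)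
    (H : LinearIndependent ℝ (prodFam w h)) : LinearIndependent ℝ (prodFam w j) := by
  rcases Nat.eq_zero_or_pos r with hr | hr
  · haveI := isEmpty_sym j hj hr
    exact linearIndependent_empty_type
  set z : Fin r := ⟨0, hr⟩
  set e := h - j with he
  set φ : Sym (Fin r) j → Sym (Fin r) h :=
    fun s => ⟨s.1 + Multiset.replicate e z, by
      have := s.2
      simp [Multiset.card_replicate, this]
      omega⟩ with hφdef
  have hφ : Function.Injective φ := by
    intro s t hst
    have : s.1 + Multiset.replicate e z = t.1 + Multiset.replicate e z := congrArg Subtype.val hst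
    exact Subtype.ext (add_right_cancel this)
  have hkey : ∀ s i, prodFam w h (φ s) i = prodFam w j s i * (w z i) ^ e := by
    intro s i
    simp [prodFam, hφdef, Multiset.map_add, Multiset.prod_add, Multiset.map_replicate,
      Multiset.prod_replicate]
  rw [Fintype.linearIndependent_iff] at H ⊢
  intro g hg s0
  have hsum : ∑ t, Function.extend φ g 0 t • prodFam w h t = 0 := by
    have h1 : ∑ t, Function.extend φ g 0 t • prodFam w h t
        = ∑ s, g s • prodFam w h (φ s) := by
      classical
      calc ∑ t, Function.extend φ g 0 t • prodFam w h t
          = ∑ t ∈ Finset.univ.image φ, Function.extend φ g 0 t • prodFam w h t := by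
            refine (Finset.sum_subset (Finset.subset_univ _) ?_).symm
            intro t _ ht
            have hnr : ¬ ∃ s, φ s = t := by
              simpa [Finset.mem_image] using ht
            rw [Function.extend_apply' _ _ _ hnr]
            simp
        _ = ∑ s, Function.extend φ g 0 (φ s) • prodFam w h (φ s) :=
            Finset.sum_image (fun x _ y _ hxy => hφ hxy)
        _ = ∑ s, g s • prodFam w h (φ s) := by
            apply Finset.sum_congr rfl
            intro s _
            rw [hφ.extend_apply]
    rw [h1]
    funext i
    rw [Finset.sum_apply]
    have h2 : ∀ s : Sym (Fin r) j, (g s • prodFam w h (φ s)) i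
        = (g s • prodFam w j s) i * (w z i) ^ e := by
      intro s
      simp [hkey s i, mul_assoc]
    rw [Finset.sum_congr rfl (fun s _ => h2 s), ← Finset.sum_mul]
    have h3 : ∑ s, (g s • prodFam w j s) i = 0 := by
      rw [← Finset.sum_apply]
      rw [hg]
      rfl
    rw [h3, zero_mul]
    rfl
  have := H (Function.extend φ g 0) hsum (φ s0)
  rwa [hφ.extend_apply] at this

lemma exists_factorization (A : Matrix (Fin m) (Fin n) ℝ) :
    ∃ (U : Matrix (Fin m) (Fin A.rank) ℝ) (V : Matrix (Fin A.rank) (Fin n) ℝ), A = U * V := by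
  set W := LinearMap.range A.mulVecLin with hW
  have hfr : finrank ℝ W = A.rank := rfl
  let b : Basis (Fin A.rank) ℝ W := Module.finBasisOfFinrankEq ℝ W hfr
  have hcol : ∀ q, (fun i => A i q) ∈ W := by
    intro q
    refine ⟨Pi.single q 1, ?_⟩
    ext i
    simp [Matrix.mulVecLin]
  refine ⟨Matrix.of fun i k => (b k : Fin m → ℝ) i,
    Matrix.of fun k q => b.repr ⟨_, hcol q⟩ k, ?_⟩
  ext i q
  have hs := b.sum_repr ⟨_, hcol q⟩
  have := congrFun (congrArg (Subtype.val) hs) i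
  simp only [AddSubmonoidClass.coe_finset_sum, Finset.sum_apply,
    SetLike.val_smul, Pi.smul_apply, smul_eq_mul] at this
  rw [Matrix.mul_apply]
  rw [← this]
  apply Finset.sum_congr rfl
  intro k _
  simp [mul_comm]

/-- the "monomial" matrix on the `U` side -/
def Pmat (U : Matrix (Fin m) (Fin r) ℝ) (j : ℕ) : Matrix (Fin m) (Sym (Fin r) j) ℝ :=
  Matrix.of fun i s => (s.1.map (fun k => U i k)).prod

/-- the "monomial" matrix on the `V` side, with multinomial coefficients -/
def Qmat (V : Matrix (Fin r) (Fin n) ℝ) (j : ℕ) : Matrix (Sym (Fin r) j) (Fin n) ℝ :=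
  Matrix.of fun s q => (s.1.countPerms : ℝ) * (s.1.map (fun k => V k q)).prod

lemma had_eq (A : Matrix (Fin m) (Fin n) ℝ) (U : Matrix (Fin m) (Fin r) ℝ)
    (V : Matrix (Fin r) (Fin n) ℝ) (hA : A = U * V) (j : ℕ) :
    hadamardPow A j = Pmat U j * Qmat V j := by
  ext i q
  rw [hadamardPow, Matrix.mul_apply]
  simp only [Matrix.of_apply, hA, Matrix.mul_apply]
  rw [Finset.sum_pow, Finset.sym_univ]
  apply Finset.sum_congr rfl
  intro s _
  rw [Pmat, Qmat]
  simp only [Matrix.of_apply]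
  rw [show (s.1.map (fun k => U i k * V k q)).prod
      = (s.1.map (fun k => U i k)).prod * (s.1.map (fun k => V k q)).prod by
    rw [← Multiset.prod_map_mul]]
  ring

lemma card_sym (j : ℕ) : Fintype.card (Sym (Fin r) j) = (r + j - 1).choose j := by
  rw [Sym.card_sym_eq_choose, Fintype.card_fin]

lemma rank_mul_eq {N : Type*} [Fintype N] (P : Matrix (Fin m) N ℝ) (Q : Matrix N (Fin n) ℝ)
    (hP : P.rank = Fintype.card N) (hQ : Q.rank = Fintype.card N) :
    (P * Q).rank = Fintype.card N := by
  have hinj := (rank_eq_card_iff P).mp hP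
  have hsurj : LinearMap.range Q.mulVecLin = ⊤ := by
    apply Submodule.eq_top_of_finrank_eq
    rw [Module.finrank_fintype_fun_eq_card]
    exact hQ
  unfold Matrix.rank
  rw [Matrix.mulVecLin_mul, LinearMap.range_comp, hsurj, Submodule.map_top,
    LinearMap.finrank_range_of_inj hinj, Module.finrank_fintype_fun_eq_card]

-- key identifications
lemma Pmat_transpose (U : Matrix (Fin m) (Fin r) ℝ) (j : ℕ) :
    (Pmat U j)ᵀ = prodFam (fun k i => U i k) j := rfl

lemma Qmat_eq (V : Matrix (Fin r) (Fin n) ℝ) (j : ℕ) :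
    ((Qmat V j)ᵀ)ᵀ = fun s => ((s.1.countPerms : ℝ)) • prodFam (fun k q => V k q) j s := by
  funext s q
  simp [Qmat, prodFam]

theorem main (m n : ℕ) (A : Matrix (Fin m) (Fin n) ℝ)
    (h : ℕ) (hh : 1 ≤ h)
    (H : (hadamardPow A h).rank = (A.rank + h - 1).choose h) :
    ∀ j, 1 ≤ j → j ≤ h → (hadamardPow A j).rank = (A.rank + j - 1).choose j := by
  intro j hj hjh
  obtain ⟨U, V, hA⟩ := exists_factorization A
  have Hh : (hadamardPow A h).rank = Fintype.card (Sym (Fin A.rank) h) := by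
    rw [H, card_sym]
  rw [had_eq A U V hA h] at Hh
  -- full ranks of the factors in degree h
  have hcard : ∀ {N : Type} [Fintype N] (P : Matrix (Fin m) N ℝ), P.rank ≤ Fintype.card N :=
    fun P => P.rank_le_card_width
  have hPh : (Pmat U h).rank = Fintype.card (Sym (Fin A.rank) h) :=
    le_antisymm (Matrix.rank_le_card_width _)
      (by rw [← Hh]; exact Matrix.rank_mul_le_left _ _)
  have hQh : (Qmat V h).rank = Fintype.card (Sym (Fin A.rank) h) :=
    le_antisymm
      (by rw [← Matrix.rank_transpose]; exact Matrix.rank_le_card_width _)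
      (by rw [← Hh]; exact Matrix.rank_mul_le_right _ _)
  -- linear independence in degree h
  have hPind : LinearIndependent ℝ (prodFam (fun k i => U i k) h) := by
    rw [← Pmat_transpose]
    exact (inj_iff_linIndep _).mp ((rank_eq_card_iff _).mp hPh)
  have hmultne : ∀ {j : ℕ} (s : Sym (Fin A.rank) j), ((s.1.countPerms : ℝ)) ≠ 0 := by
    intro j' s
    have : 0 < s.1.countPerms := by
      unfold Multiset.countPerms Finsupp.multinomial
      exact Nat.multinomial_pos _ _
    exact_mod_cast this.ne'
  have hQind : LinearIndependent ℝ (prodFam (fun k q => V k q) h) := by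
    have h1 : ((Qmat V h)ᵀ).rank = Fintype.card (Sym (Fin A.rank) h) := by
      rw [Matrix.rank_transpose]; exact hQh
    have h2 := (inj_iff_linIndep _).mp ((rank_eq_card_iff _).mp h1)
    rw [Qmat_eq] at h2
    exact (linIndep_smul_iff _ (fun s => hmultne s) _).mp h2
  -- transfer down to degree j
  have hPjind := linIndep_down _ hj hjh hPind
  have hQjind := linIndep_down _ hj hjh hQind
  -- back to ranks
  have hPj : (Pmat U j).rank = Fintype.card (Sym (Fin A.rank) j) := by
    rw [rank_eq_card_iff, inj_iff_linIndep, Pmat_transpose]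
    exact hPjind
  have hQj : (Qmat V j).rank = Fintype.card (Sym (Fin A.rank) j) := by
    rw [← Matrix.rank_transpose, rank_eq_card_iff, inj_iff_linIndep]
    have := (linIndep_smul_iff _ (fun s => hmultne s) _).mpr hQjind
    rw [← Qmat_eq] at this
    exact this
  rw [had_eq A U V hA j, rank_mul_eq _ _ hPj hQj, card_sym]

end

end HadamardPowAux

/-- If the `h`-fold Hadamard power of a real matrix `A` of rank `r` has rank exactly
`C(r + h - 1, h)`, then for every `1 ≤ j ≤ h` the `j`-fold Hadamard power has rank
exactly `C(r + j - 1, j)`. -/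
theorem rank_hadamardPow_eq_of_rank_eq (m n : ℕ) (A : Matrix (Fin m) (Fin n) ℝ)
    (h : ℕ) (hh : 1 ≤ h)
    (H : (hadamardPow A h).rank = (A.rank + h - 1).choose h) :
    ∀ j, 1 ≤ j → j ≤ h → (hadamardPow A j).rank = (A.rank + j - 1).choose j :=
  HadamardPowAux.main m n A h hh H
end

section
/- Let X ⊂ S^{m-1} be a finite s-distance set, with inner product set A(X) of size s. Write the annihilator polynomial F_X(t) = ∏_{α∈A(X)} (t-α)/(1-α) in the Gegenbauer basis as F_X(t) = ∑_{k=0}^s f_k G_k(t). Then |X|(1 - |X| f_0) = ∑_{k=1}^s f_k ||Hₖᵀ H_0||², where ||N||² is the sum of squares of entries of N and H_k is the characteristic matrix of degree k. -/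
open Polynomial Finset
open scoped RealInnerProductSpace Classical

/-- `lamG m k = k / (m + 2k - 2)`, the coefficients in the Gegenbauer recurrence. -/
noncomputable def lamG (m k : ℕ) : ℝ := (k : ℝ) / ((m : ℝ) + 2 * k - 2)

/-- The Gegenbauer polynomials for `S^{m-1}`, normalized so that `geg m k` has value
`dim Harm_k(ℝ^m)` at `1`: `G_0 = 1`, `G_1 = m X`, and
`X * G_k = lamG (k+1) • G_{k+1} + (1 - lamG (k-1)) • G_{k-1}`. -/
noncomputable def geg (m : ℕ) : ℕ → Polynomial ℝ
  | 0 => 1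
  | 1 => Polynomial.C (m : ℝ) * Polynomial.X
  | (k + 2) => (lamG m (k + 2))⁻¹ •
      (Polynomial.X * geg m (k + 1) - (1 - lamG m k) • geg m k)

/-- The set of inner products between distinct points of `X`. -/
noncomputable def innerSet (m : ℕ) (X : Finset (EuclideanSpace ℝ (Fin m))) : Finset ℝ :=
  ((X ×ˢ X).filter fun p => p.1 ≠ p.2).image fun p => ⟪p.1, p.2⟫

/-- `X` is a spherical `t`-design iff `∑_{x,y ∈ X} G_i(⟨x,y⟩) = 0` for `1 ≤ i ≤ t`. -/
noncomputable def IsGegDesign (m t : ℕ) (X : Finset (EuclideanSpace ℝ (Fin m))) : Prop :=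
  ∀ i : ℕ, 1 ≤ i → i ≤ t → ∑ x ∈ X, ∑ y ∈ X, (geg m i).eval ⟪x, y⟫ = 0

/-- `hdim m k = dim Harm_k(ℝ^m) = C(m+k-1, k) - C(m+k-3, k-2)`. -/
def hdim (m k : ℕ) : ℕ :=
  (m + k - 1).choose k - if 2 ≤ k then (m + k - 3).choose (k - 2) else 0

/-- Delsarte–Goethals–Seidel identity: for a finite `s`-distance set `X ⊆ S^{m-1}` with
annihilator polynomial `F_X = ∏_{α ∈ A(X)} (t-α)/(1-α) = ∑_{k=0}^s f k • G_k`, and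
characteristic matrices `H k` built from functions `φ k` satisfying the addition formula
`G_k(⟨x,y⟩) = ∑_i φ_{k,i}(x) φ_{k,i}(y)` (with `H 0` the all-ones column), one has
`|X| (1 - |X| f_0) = ∑_{k=1}^s f k ‖Hₖᵀ H_0‖²`. -/
theorem dgs_identity (m s : ℕ)
    (X : Finset (EuclideanSpace ℝ (Fin m))) (hX : ∀ x ∈ X, ‖x‖ = 1)
    (hdist : (innerSet m X).card = s)
    (d : ℕ → ℕ) (φ : (k : ℕ) → Fin (d k) → EuclideanSpace ℝ (Fin m) → ℝ)
    (haddition : ∀ k ≤ s, ∀ x ∈ X, ∀ y ∈ X,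
      (geg m k).eval ⟪x, y⟫ = ∑ i : Fin (d k), φ k i x * φ k i y)
    (hd0 : d 0 = 1) (hφ0 : ∀ i x, φ 0 i x = 1)
    (H : (k : ℕ) → Matrix ↥X (Fin (d k)) ℝ)
    (hH : ∀ k, H k = Matrix.of fun (x : ↥X) i => φ k i (x : EuclideanSpace ℝ (Fin m)))
    (f : ℕ → ℝ)
    (hF : (∏ α ∈ innerSet m X, (1 - α)⁻¹ • (Polynomial.X - Polynomial.C α)) =
      ∑ k ∈ Finset.range (s + 1), f k • geg m k) :
    (X.card : ℝ) * (1 - (X.card : ℝ) * f 0) =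
      ∑ k ∈ Finset.Icc 1 s, f k *
        (∑ i : Fin (d k), ∑ j : Fin (d 0), (((H k).transpose * (H 0)) i j) ^ 2) := by

  classical
  set P : Polynomial ℝ := ∏ α ∈ innerSet m X, (1 - α)⁻¹ • (Polynomial.X - Polynomial.C α) with hP
  have hPeval : ∀ t : ℝ, P.eval t = ∏ α ∈ innerSet m X, (1 - α)⁻¹ * (t - α) := by
    intro t
    rw [hP, Polynomial.eval_prod]
    refine Finset.prod_congr rfl fun α _ => ?_
    simp [smul_eq_mul]
  have hne1 : ∀ α ∈ innerSet m X, α ≠ 1 := by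
    intro α hα
    simp only [innerSet, Finset.mem_image, Finset.mem_filter, Finset.mem_product] at hα
    obtain ⟨⟨x, y⟩, ⟨⟨hx, hy⟩, hxy⟩, rfl⟩ := hα
    intro h
    exact hxy ((inner_eq_one_iff_of_norm_eq_one (hX x hx) (hX y hy)).mp h)
  have hdiag : ∀ x ∈ X, P.eval ⟪x, x⟫ = 1 := by
    intro x hx
    have h1 : ⟪x, x⟫ = (1 : ℝ) := by
      rw [real_inner_self_eq_norm_sq, hX x hx]; norm_num
    rw [h1, hPeval]
    refine Finset.prod_eq_one fun α hα => ?_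
    have hne : (1 : ℝ) - α ≠ 0 := sub_ne_zero.mpr (Ne.symm (hne1 α hα))
    field_simp
  have hoff : ∀ x ∈ X, ∀ y ∈ X, x ≠ y → P.eval ⟪x, y⟫ = 0 := by
    intro x hx y hy hxy
    have hmem : ⟪x, y⟫ ∈ innerSet m X := by
      simp only [innerSet, Finset.mem_image, Finset.mem_filter, Finset.mem_product]
      exact ⟨(x, y), ⟨⟨hx, hy⟩, hxy⟩, rfl⟩
    rw [hPeval]
    exact Finset.prod_eq_zero hmem (by ring)
  have hsumP : ∑ x ∈ X, ∑ y ∈ X, P.eval ⟪x, y⟫ = (X.card : ℝ) := by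
    have h1 : ∀ x ∈ X, ∑ y ∈ X, P.eval ⟪x, y⟫ = 1 := by
      intro x hx
      rw [Finset.sum_eq_single x (fun y hy hyx => hoff x hx y hy (Ne.symm hyx))
        (fun h => absurd hx h)]
      exact hdiag x hx
    rw [Finset.sum_congr rfl h1]
    simp
  set T : ℕ → ℝ := fun k => ∑ x ∈ X, ∑ y ∈ X, (geg m k).eval ⟪x, y⟫ with hT
  have hsumP2 : ∑ x ∈ X, ∑ y ∈ X, P.eval ⟪x, y⟫
      = ∑ k ∈ Finset.range (s + 1), f k * T k := by
    have h2 : ∀ x ∈ X, ∀ y ∈ X, P.eval ⟪x, y⟫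
        = ∑ k ∈ Finset.range (s + 1), f k * (geg m k).eval ⟪x, y⟫ := by
      intro x hx y hy
      rw [hF, Polynomial.eval_finset_sum]
      exact Finset.sum_congr rfl fun k _ => by simp [smul_eq_mul]
    calc ∑ x ∈ X, ∑ y ∈ X, P.eval ⟪x, y⟫
        = ∑ x ∈ X, ∑ y ∈ X, ∑ k ∈ Finset.range (s + 1),
            f k * (geg m k).eval ⟪x, y⟫ :=
          Finset.sum_congr rfl fun x hx => Finset.sum_congr rfl fun y hy => h2 x hx y hy
      _ = ∑ x ∈ X, ∑ k ∈ Finset.range (s + 1), ∑ y ∈ X,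
            f k * (geg m k).eval ⟪x, y⟫ :=
          Finset.sum_congr rfl fun x _ => Finset.sum_comm
      _ = ∑ k ∈ Finset.range (s + 1), ∑ x ∈ X, ∑ y ∈ X,
            f k * (geg m k).eval ⟪x, y⟫ := Finset.sum_comm
      _ = ∑ k ∈ Finset.range (s + 1), f k * T k := by
          refine Finset.sum_congr rfl fun k _ => ?_
          rw [hT]
          simp [Finset.mul_sum]
  have hTadd : ∀ k ≤ s, T k = ∑ i : Fin (d k), (∑ x ∈ X, φ k i x) ^ 2 := by
    intro k hk
    rw [hT]
    calc (∑ x ∈ X, ∑ y ∈ X, (geg m k).eval ⟪x, y⟫)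
        = ∑ x ∈ X, ∑ y ∈ X, ∑ i : Fin (d k), φ k i x * φ k i y :=
          Finset.sum_congr rfl fun x hx => Finset.sum_congr rfl fun y hy =>
            haddition k hk x hx y hy
      _ = ∑ x ∈ X, ∑ i : Fin (d k), ∑ y ∈ X, φ k i x * φ k i y :=
          Finset.sum_congr rfl fun x _ => Finset.sum_comm
      _ = ∑ i : Fin (d k), ∑ x ∈ X, ∑ y ∈ X, φ k i x * φ k i y := Finset.sum_comm
      _ = ∑ i : Fin (d k), (∑ x ∈ X, φ k i x) ^ 2 := by
          refine Finset.sum_congr rfl fun i _ => ?_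
          rw [sq, Finset.sum_mul]
          exact Finset.sum_congr rfl fun x _ => by rw [Finset.mul_sum]
  have hT0 : T 0 = (X.card : ℝ) ^ 2 := by
    rw [hT]
    have : ∀ x : EuclideanSpace ℝ (Fin m), ∀ y : EuclideanSpace ℝ (Fin m),
        (geg m 0).eval ⟪x, y⟫ = 1 := by intro x y; simp [geg]
    simp only [this, Finset.sum_const, nsmul_eq_mul, mul_one, sq]
  have hM : ∀ k, (∑ i : Fin (d k), ∑ j : Fin (d 0), (((H k).transpose * (H 0)) i j) ^ 2)
      = ∑ i : Fin (d k), (∑ x ∈ X, φ k i x) ^ 2 := by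
    intro k
    refine Finset.sum_congr rfl fun i _ => ?_
    have hentry : ∀ j : Fin (d 0), ((H k).transpose * (H 0)) i j = ∑ x ∈ X, φ k i x := by
      intro j
      rw [Matrix.mul_apply]
      simp only [Matrix.transpose_apply, hH, Matrix.of_apply, hφ0, mul_one]
      exact Finset.sum_coe_sort X fun x => φ k i x
    simp only [hentry, Finset.sum_const, Finset.card_univ, Fintype.card_fin, hd0, one_smul]
  have hkey : (X.card : ℝ)
      = (∑ i ∈ Finset.range s, f (i + 1) * T (i + 1)) + f 0 * (X.card : ℝ) ^ 2 := by
    have h := hsumP.symm.trans hsumP2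
    rwa [Finset.sum_range_succ', hT0] at h
  have hIcc : ∑ k ∈ Finset.Icc 1 s, f k *
        (∑ i : Fin (d k), ∑ j : Fin (d 0), (((H k).transpose * (H 0)) i j) ^ 2)
      = ∑ i ∈ Finset.range s, f (i + 1) * T (i + 1) := by
    rw [show Finset.Icc 1 s = Finset.Ico 1 (s + 1) by rfl, Finset.sum_Ico_eq_sum_range]
    refine Finset.sum_congr (by simp) fun i hi => ?_
    rw [Finset.mem_range] at hi
    rw [hM, ← hTadd (1 + i) (by omega), add_comm 1 i]
  rw [hIcc]
  nlinarith [hkey]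
end

section
/- Let (X, R) be a Q-polynomial association scheme of class s with Krein parameters a_i* = q_{1,i}^i, b_i* = q_{1,i+1}^i, c_i* = q_{1,i-1}^i and m = m_1. Suppose a_0* = a_1* = ⋯ = a_l* = 0 for some l ≤ s-1. Then for each i with 0 ≤ i ≤ l+1 there exist positive reals f_{i,k} such that the Hadamard power E_1^{∘i} = ∑_{k ≡ i (mod 2), 0 ≤ k ≤ i} f_{i,k} E_k. -/
open Matrix Finset

/-- The all-ones matrix. -/
def allOnes (X : Type*) : Matrix X X ℝ := Matrix.of fun _ _ => (1 : ℝ)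

section

variable {X : Type*} [Fintype X] [DecidableEq X]

/-- `A 0, …, A s` are the adjacency matrices of a symmetric association scheme of
class `s` on `X`. -/
structure IsAssocScheme (s : ℕ) (A : ℕ → Matrix X X ℝ) : Prop where
  zero_one : ∀ i ≤ s, ∀ x y, A i x y = 0 ∨ A i x y = 1
  nonempty : ∀ i ≤ s, A i ≠ 0
  eq_one : A 0 = 1
  sum_eq : ∑ i ∈ Finset.range (s + 1), A i = allOnes X
  symm : ∀ i ≤ s, (A i)ᵀ = A i
  mul_closed : ∀ i ≤ s, ∀ j ≤ s, ∃ p : ℕ → ℝ,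
    A i * A j = ∑ k ∈ Finset.range (s + 1), p k • A k

/-- `E 0, …, E s` are the primitive idempotents of the scheme, with
`E 0 = |X|⁻¹ J`. -/
structure IsPrimIdem (s : ℕ) (A E : ℕ → Matrix X X ℝ) : Prop where
  symm : ∀ i ≤ s, (E i).IsSymm
  mem_span : ∀ i ≤ s, ∃ q : ℕ → ℝ, E i = ∑ k ∈ Finset.range (s + 1), q k • A k
  orth_idem : ∀ i ≤ s, ∀ j ≤ s, E i * E j = if i = j then E i else 0
  sum_eq : ∑ i ∈ Finset.range (s + 1), E i = 1
  zero_eq : E 0 = (Fintype.card X : ℝ)⁻¹ • allOnes X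

/-- `q` is the family of Krein parameters:
`E i ∘ E j = |X|⁻¹ ∑_k q i j k • E k` (entrywise product). -/
def IsKrein (s : ℕ) (E : ℕ → Matrix X X ℝ) (q : ℕ → ℕ → ℕ → ℝ) : Prop :=
  ∀ i ≤ s, ∀ j ≤ s, Matrix.hadamard (E i) (E j) =
    (Fintype.card X : ℝ)⁻¹ • ∑ k ∈ Finset.range (s + 1), q i j k • E k

/-- The scheme is `Q`-polynomial with respect to the ordering `E 0, …, E s`:
`q 1 j k > 0` for `k = j ± 1` and `q 1 j k = 0` for `|k - j| > 1`. -/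
def IsQPoly (s : ℕ) (q : ℕ → ℕ → ℕ → ℝ) : Prop :=
  (∀ j ≤ s, ∀ k ≤ s, (k = j + 1 ∨ j = k + 1) → 0 < q 1 j k) ∧
  (∀ j ≤ s, ∀ k ≤ s, (j + 1 < k ∨ k + 1 < j) → q 1 j k = 0)

end

/-- In a `Q`-polynomial scheme of class `s` with `a*_0 = ⋯ = a*_l = 0` (`l ≤ s - 1`),
for each `0 ≤ i ≤ l + 1` the Hadamard power `E 1 ^{∘ i}` is a positive combination of the
idempotents `E k` with `k ≤ i` and `k ≡ i (mod 2)`. -/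
theorem hadamardPow_E1_parity (X : Type*) [Fintype X] [DecidableEq X] (s : ℕ) (hs : 1 ≤ s)
    (A E : ℕ → Matrix X X ℝ) (q : ℕ → ℕ → ℕ → ℝ)
    (hA : IsAssocScheme s A) (hE : IsPrimIdem s A E)
    (hK : IsKrein s E q) (hQ : IsQPoly s q)
    (l : ℕ) (hl : l + 1 ≤ s) (ha : ∀ k ≤ l, q 1 k k = 0) :
    ∀ i ≤ l + 1, ∃ f : ℕ → ℝ,
      (∀ k ≤ i, k % 2 = i % 2 → 0 < f k) ∧
      (Matrix.of fun x y => (E 1 x y) ^ i) =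
        ∑ k ∈ (Finset.range (i + 1)).filter (fun k => k % 2 = i % 2), f k • E k := by
  have hX : Nonempty X := by
    by_contra h
    exact hA.nonempty 0 (Nat.zero_le s) (by ext x y; exact absurd ⟨x⟩ h)
  have hc : (0 : ℝ) < (Fintype.card X : ℝ) := by exact_mod_cast Fintype.card_pos
  set c : ℝ := (Fintype.card X : ℝ) with hcdef
  intro i hi
  induction i with
  | zero =>
    refine ⟨fun _ => c, fun k hk _ => by interval_cases k; exact hc, ?_⟩
    have hS : (Finset.range (0 + 1)).filter (fun k => k % 2 = 0 % 2) = {0} := by decide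
    rw [hS, Finset.sum_singleton]
    ext x y
    simp only [Matrix.of_apply, pow_zero, hE.zero_eq, Matrix.smul_apply, allOnes,
      Matrix.of_apply, smul_eq_mul]
    field_simp
    exact hcdef.symm
  | succ i ih =>
    have hil : i ≤ l := by omega
    obtain ⟨f, hf, hfe⟩ := ih (by omega)
    set S := (Finset.range (i + 1)).filter (fun k => k % 2 = i % 2) with hSdef
    have hmemS : ∀ k, k ∈ S ↔ k ≤ i ∧ k % 2 = i % 2 := by
      intro k
      simp [hSdef, Finset.mem_filter, Finset.mem_range, Nat.lt_succ_iff]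
    have hks : ∀ k ∈ S, k ≤ s := fun k hk => le_trans ((hmemS k).1 hk).1 (by omega)
    -- nonnegativity of the Krein numbers appearing here
    have hq_nonneg : ∀ k ∈ S, ∀ m ≤ s, 0 ≤ q 1 k m := by
      intro k hk m hm
      have hk' := (hmemS k).1 hk
      by_cases h1 : m = k + 1 ∨ k = m + 1
      · exact le_of_lt (hQ.1 k (hks k hk) m hm h1)
      by_cases h2 : m = k
      · subst h2; rw [ha m (by omega)]
      · rw [hQ.2 k (hks k hk) m hm (by omega)]
    -- the coefficients
    refine ⟨fun m => c⁻¹ * ∑ k ∈ S, f k * q 1 k m, ?_, ?_⟩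
    · -- positivity
      intro m hm hpar
      refine mul_pos (inv_pos.mpr hc) (Finset.sum_pos' ?_ ?_)
      · intro k hk
        exact mul_nonneg (le_of_lt (hf k ((hmemS k).1 hk).1 ((hmemS k).1 hk).2))
          (hq_nonneg k hk m (by omega))
      · rcases Nat.eq_zero_or_pos m with hm0 | hm1
        · -- m = 0, use k = 1
          have hi1 : 1 ≤ i ∧ 1 % 2 = i % 2 := by omega
          refine ⟨1, (hmemS 1).2 hi1, mul_pos (hf 1 hi1.1 hi1.2) ?_⟩
          subst hm0
          exact hQ.1 1 (by omega) 0 (by omega) (Or.inr rfl)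
        · -- m ≥ 1, use k = m - 1
          have hk1 : m - 1 ≤ i ∧ (m - 1) % 2 = i % 2 := by omega
          refine ⟨m - 1, (hmemS (m - 1)).2 hk1, mul_pos (hf _ hk1.1 hk1.2) ?_⟩
          exact hQ.1 (m - 1) (by omega) m (by omega) (Or.inl (by omega))
    · -- the matrix identity
      set S' := (Finset.range (i + 1 + 1)).filter (fun k => k % 2 = (i + 1) % 2) with hS'def
      have hmemS' : ∀ m, m ∈ S' ↔ m ≤ i + 1 ∧ m % 2 = (i + 1) % 2 := by
        intro m
        simp [hS'def, Finset.mem_filter, Finset.mem_range, Nat.lt_succ_iff]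
      have hsubset : S' ⊆ Finset.range (s + 1) := by
        intro m hm
        have := (hmemS' m).1 hm
        exact Finset.mem_range.mpr (by omega)
      -- coefficient vanishes off S'
      have hvan : ∀ m ∈ Finset.range (s + 1), m ∉ S' → ∀ k ∈ S, q 1 k m = 0 := by
        intro m hm hm' k hk
        have hm'' : ¬(m ≤ i + 1 ∧ m % 2 = (i + 1) % 2) := fun h => hm' ((hmemS' m).2 h)
        have hk' := (hmemS k).1 hk
        have hmr := Finset.mem_range.mp hm
        by_cases h2 : m = k
        · subst h2; exact ha m (by omega)
        · refine hQ.2 k (hks k hk) m (by omega) (by omega)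
      ext x y
      have h1 : (E 1 x y) ^ i = ∑ k ∈ S, f k * E k x y := by
        have := congrFun (congrFun hfe x) y
        simpa [Matrix.sum_apply, Matrix.smul_apply, smul_eq_mul] using this
      have step : (E 1 x y) ^ (i + 1) =
          ∑ m ∈ Finset.range (s + 1), (c⁻¹ * ∑ k ∈ S, f k * q 1 k m) * E m x y := by
        calc (E 1 x y) ^ (i + 1) = E 1 x y * (E 1 x y) ^ i := by ring
          _ = ∑ k ∈ S, f k * (E 1 x y * E k x y) := by
              rw [h1, Finset.mul_sum]; exact Finset.sum_congr rfl fun k _ => by ring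
          _ = ∑ k ∈ S, f k * (c⁻¹ * ∑ m ∈ Finset.range (s + 1), q 1 k m * E m x y) := by
              refine Finset.sum_congr rfl fun k hk => ?_
              have hKk := congrFun (congrFun (hK 1 hs k (hks k hk)) x) y
              simp only [Matrix.hadamard_apply, Matrix.smul_apply, Matrix.sum_apply,
                smul_eq_mul] at hKk
              rw [hKk]
          _ = ∑ k ∈ S, ∑ m ∈ Finset.range (s + 1), f k * (c⁻¹ * (q 1 k m * E m x y)) := by
              refine Finset.sum_congr rfl fun k _ => ?_
              rw [Finset.mul_sum, Finset.mul_sum]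
          _ = ∑ m ∈ Finset.range (s + 1), (c⁻¹ * ∑ k ∈ S, f k * q 1 k m) * E m x y := by
              rw [Finset.sum_comm]
              refine Finset.sum_congr rfl fun m _ => ?_
              rw [Finset.mul_sum, Finset.sum_mul]
              exact Finset.sum_congr rfl fun k _ => by ring
      have hrestrict : ∑ m ∈ Finset.range (s + 1), (c⁻¹ * ∑ k ∈ S, f k * q 1 k m) * E m x y
          = ∑ m ∈ S', (c⁻¹ * ∑ k ∈ S, f k * q 1 k m) * E m x y := by
        refine (Finset.sum_subset hsubset ?_).symm
        intro m hm hm'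
        have : ∑ k ∈ S, f k * q 1 k m = 0 :=
          Finset.sum_eq_zero fun k hk => by rw [hvan m hm hm' k hk, mul_zero]
        rw [this, mul_zero, zero_mul]
      simp only [Matrix.of_apply, Matrix.sum_apply, Matrix.smul_apply, smul_eq_mul]
      rw [step, hrestrict]
end

section
/- Let (X, R) be an s-class Q-polynomial association scheme with respect to the ordering E_0, E_1, ..., E_s, with m = rank(E_1), and let l = max{k : q_{1,0}^0 = q_{1,1}^1 = ⋯ = q_{1,k}^k = 0}. If l ≤ (s-2)/2, then |X| ≤ C(m+s-1, s). -/
open Matrix Finset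

section Aux

variable {X : Type*} [Fintype X] [DecidableEq X]

private lemma sum4_comm (f : X → X → X → X → ℝ) :
    ∑ x, ∑ y, ∑ z, ∑ w, f x y z w = ∑ z, ∑ w, ∑ x, ∑ y, f x y z w :=
  calc ∑ x, ∑ y, ∑ z, ∑ w, f x y z w
      = ∑ x, ∑ z, ∑ y, ∑ w, f x y z w :=
        Finset.sum_congr rfl fun _ _ => Finset.sum_comm
    _ = ∑ z, ∑ x, ∑ y, ∑ w, f x y z w := Finset.sum_comm
    _ = ∑ z, ∑ x, ∑ w, ∑ y, f x y z w :=
        Finset.sum_congr rfl fun _ _ => Finset.sum_congr rfl fun _ _ => Finset.sum_comm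
    _ = ∑ z, ∑ w, ∑ x, ∑ y, f x y z w :=
        Finset.sum_congr rfl fun _ _ => Finset.sum_comm

/-- expansion of a symmetric idempotent as a Gram matrix of its own rows -/
private lemma sym_idem_expand {B : Matrix X X ℝ} (hB : B * B = B) (hBs : Bᵀ = B)
    (x y : X) : B x y = ∑ z, B x z * B y z := by
  nth_rewrite 1 [← hB]
  rw [Matrix.mul_apply]
  refine Finset.sum_congr rfl fun z _ => ?_
  have h : B z y = B y z := congrFun (congrFun hBs y) z
  rw [h]

/-- Quadratic forms of Hadamard products of symmetric idempotents are nonnegative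
(special case of the Schur product theorem). -/
private lemma had_qf_nonneg (B C : Matrix X X ℝ) (hB : B * B = B) (hBs : Bᵀ = B)
    (hC : C * C = C) (hCs : Cᵀ = C) (v : X → ℝ) :
    0 ≤ v ⬝ᵥ (Matrix.hadamard B C).mulVec v := by
  have L : v ⬝ᵥ (Matrix.hadamard B C).mulVec v
      = ∑ x, ∑ y, ∑ z, ∑ w, (v x * B x z * C x w) * (v y * B y z * C y w) := by
    simp only [dotProduct, Matrix.mulVec, Matrix.hadamard_apply]
    refine Finset.sum_congr rfl fun x _ => ?_
    rw [Finset.mul_sum]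
    refine Finset.sum_congr rfl fun y _ => ?_
    rw [sym_idem_expand hB hBs x y, sym_idem_expand hC hCs x y, Finset.sum_mul_sum]
    rw [Finset.sum_mul, Finset.mul_sum]
    refine Finset.sum_congr rfl fun z _ => ?_
    rw [Finset.sum_mul, Finset.mul_sum]
    refine Finset.sum_congr rfl fun w _ => ?_
    ring
  rw [L, sum4_comm]
  refine Finset.sum_nonneg fun z _ => Finset.sum_nonneg fun w _ => ?_
  rw [← Finset.sum_mul_sum]
  exact mul_self_nonneg _

/-- Span of degree-`a` monomial functions in the coordinates `w`. -/
private def monSp {m : ℕ} (w : X → Fin m → ℝ) (a : ℕ) : Submodule ℝ (X → ℝ) :=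
  Submodule.span ℝ
    (Set.range fun μ : Sym (Fin m) a => fun x => ((μ : Multiset (Fin m)).map (w x)).prod)

private lemma monSp_mul {m : ℕ} {w : X → Fin m → ℝ} {a b : ℕ} {f g : X → ℝ}
    (hf : f ∈ monSp w a) (hg : g ∈ monSp w b) : f * g ∈ monSp w (a + b) := by
  have h : monSp w a * monSp w b ≤ monSp w (a + b) := by
    rw [monSp, monSp, Submodule.span_mul_span]
    refine Submodule.span_le.2 ?_
    rintro - ⟨-, ⟨μ, rfl⟩, -, ⟨ν, rfl⟩, rfl⟩
    refine Submodule.subset_span ⟨μ.append ν, ?_⟩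
    funext x
    simp [Sym.append, Multiset.prod_add]
  exact h (Submodule.mul_mem_mul hf hg)

private lemma monSp_one {m : ℕ} {w : X → Fin m → ℝ} : (fun _ => (1:ℝ)) ∈ monSp w 0 :=
  Submodule.subset_span ⟨(Sym.nil : Sym (Fin m) 0), by funext x; simp⟩

private lemma monSp_pow {m : ℕ} {w : X → Fin m → ℝ} {a : ℕ} {f : X → ℝ}
    (hf : f ∈ monSp w a) : ∀ d : ℕ, f ^ d ∈ monSp w (a * d)
  | 0 => by rw [pow_zero, Nat.mul_zero]; exact monSp_one (w := w)
  | d + 1 => by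
      have h := monSp_mul (monSp_pow hf d) hf
      rw [← pow_succ] at h
      have e : a * d + a = a * (d + 1) := by ring
      rwa [e] at h

private lemma monSp_coord {m : ℕ} {w : X → Fin m → ℝ} (i : Fin m) :
    (fun x => w x i) ∈ monSp w 1 :=
  Submodule.subset_span ⟨Sym.replicate 1 i, by funext x; simp [Sym.coe_replicate]⟩

private lemma monSp_finrank {m : ℕ} (w : X → Fin m → ℝ) (a : ℕ) :
    Module.finrank ℝ (monSp w a) ≤ (m + a - 1).choose a := by
  classical
  have h1 := finrank_span_le_card (R := ℝ) (M := X → ℝ)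
    (Set.range fun μ : Sym (Fin m) a => fun x => ((μ : Multiset (Fin m)).map (w x)).prod)
  refine h1.trans ?_
  rw [Set.toFinset_range]
  refine (Finset.card_image_le).trans ?_
  simp [Sym.card_sym_eq_choose]

/-- Entrywise (Hadamard) powers of a matrix. -/
private def hadPow (B : Matrix X X ℝ) : ℕ → Matrix X X ℝ
  | 0 => allOnes X
  | d + 1 => Matrix.hadamard B (hadPow B d)

private lemma hadPow_apply (B : Matrix X X ℝ) : ∀ d x y, hadPow B d x y = (B x y) ^ d
  | 0, x, y => by simp [hadPow, allOnes]
  | d + 1, x, y => by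
      rw [hadPow, Matrix.hadamard_apply, hadPow_apply B d, pow_succ]
      ring

/-- Coefficients of Hadamard powers of `E 1` in the idempotent basis. -/
private noncomputable def kcoef (s : ℕ) (q : ℕ → ℕ → ℕ → ℝ) (N : ℝ) : ℕ → ℕ → ℝ
  | 0 => fun j => if j = 0 then N else 0
  | d + 1 => fun k => N⁻¹ * ∑ j ∈ Finset.range (s + 1), kcoef s q N d j * q 1 j k

private lemma hadamard_sum_smul (B : Matrix X X ℝ) (t : Finset ℕ) (a : ℕ → ℝ)
    (M : ℕ → Matrix X X ℝ) :
    Matrix.hadamard B (∑ j ∈ t, a j • M j) = ∑ j ∈ t, a j • Matrix.hadamard B (M j) := by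
  ext x y
  simp [Matrix.hadamard_apply, Matrix.sum_apply, Finset.mul_sum, mul_left_comm]

end Aux

/-- Let `(X, R)` be an `s`-class `Q`-polynomial scheme, `m = rank (E 1)`, and
`l = max{k : q 1 0 0 = ⋯ = q 1 k k = 0}`.  If `l ≤ (s - 2)/2` then
`|X| ≤ C(m + s - 1, s)`. -/
theorem card_le_QPoly_small_l (X : Type*) [Fintype X] [DecidableEq X] (s : ℕ) (hs : 1 ≤ s)
    (A E : ℕ → Matrix X X ℝ) (q : ℕ → ℕ → ℕ → ℝ)
    (hA : IsAssocScheme s A) (hE : IsPrimIdem s A E)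
    (hK : IsKrein s E q) (hQ : IsQPoly s q)
    (l : ℕ) (ha : ∀ k ≤ l, q 1 k k = 0) (hmax : q 1 (l + 1) (l + 1) ≠ 0)
    (hl : 2 * l + 2 ≤ s) :
    Fintype.card X ≤ ((E 1).rank + s - 1).choose s := by
  classical
  rcases isEmpty_or_nonempty X with hX | hX
  · rw [Fintype.card_eq_zero]; exact Nat.zero_le _
  obtain ⟨x₀⟩ := hX
  set N : ℝ := (Fintype.card X : ℝ) with hNdef
  have hN0 : 0 < N := by
    have h : 0 < Fintype.card X := Fintype.card_pos_iff.mpr ⟨x₀⟩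
    rw [hNdef]; exact_mod_cast h
  have hNne : N ≠ 0 := ne_of_gt hN0
  have horth := hE.orth_idem
  have hidem : ∀ j ≤ s, E j * E j = E j := by
    intro j hj; have h := horth j hj j hj; simpa using h
  have hsymm : ∀ j ≤ s, (E j)ᵀ = E j := fun j hj => hE.symm j hj
  have hE1idem : E 1 * E 1 = E 1 := hidem 1 hs
  have hE1symm : (E 1)ᵀ = E 1 := hsymm 1 hs
  -- collapsing sums against an idempotent
  have hcollapse : ∀ (a : ℕ → ℝ) (j : ℕ), j ≤ s →
      (∑ k ∈ Finset.range (s+1), a k • E k) * E j = a j • E j := by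
    intro a j hj
    rw [Finset.sum_mul, Finset.sum_eq_single j]
    · rw [Matrix.smul_mul, horth j hj j hj, if_pos rfl]
    · intro k hk hkj
      rw [Matrix.smul_mul, horth k (Nat.lt_succ_iff.mp (Finset.mem_range.mp hk)) j hj,
        if_neg hkj, smul_zero]
    · intro h; exact absurd (Finset.mem_range.mpr (by omega)) h
  have hE0ne : E 0 ≠ 0 := by
    intro h
    have h1 := congrFun (congrFun hE.zero_eq x₀) x₀
    rw [h] at h1
    have : (0:ℝ) = N⁻¹ := by simpa [allOnes] using h1
    exact (inv_ne_zero hNne) this.symm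
  have hEne : ∀ j, j ≤ s → E j ≠ 0 := by
    intro j
    induction j with
    | zero => exact fun _ => hE0ne
    | succ n ih =>
      intro hn1 h0
      have hkr := hK 1 hs (n+1) hn1
      rw [h0] at hkr
      have hz : Matrix.hadamard (E 1) (0 : Matrix X X ℝ) = 0 := by
        ext x y; simp [Matrix.hadamard_apply]
      rw [hz] at hkr
      have h2 : (0 : Matrix X X ℝ) * E n
          = (N⁻¹ • ∑ k ∈ Finset.range (s+1), q 1 (n+1) k • E k) * E n := by rw [← hkr]
      rw [Matrix.zero_mul, Matrix.smul_mul, hcollapse _ n (by omega)] at h2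
      have hq : 0 < q 1 (n+1) n := hQ.1 (n+1) hn1 n (by omega) (Or.inr rfl)
      have h3 : E n = 0 := by
        have h4 := h2.symm
        rw [smul_smul, smul_eq_zero] at h4
        rcases h4 with h4 | h4
        · exact absurd h4 (by positivity)
        · exact h4
      exact ih (by omega) h3
  -- diagonal Krein parameters are nonnegative
  have hqdiag : ∀ j, j ≤ s → 0 ≤ q 1 j j := by
    intro j hj
    obtain ⟨xx, yy, hxy⟩ : ∃ x y, E j x y ≠ 0 := by
      by_contra h
      push_neg at h
      exact hEne j hj (by ext x y; simp [h])
    set v : X → ℝ := (E j).mulVec (Pi.single yy 1) with hvdef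
    have hvx : v xx ≠ 0 := by
      rw [hvdef, Matrix.mulVec_single]
      simpa using hxy
    have hvv : 0 < v ⬝ᵥ v := by
      refine Finset.sum_pos' (fun i _ => mul_self_nonneg _) ⟨xx, Finset.mem_univ _, ?_⟩
      exact mul_self_pos.mpr hvx
    have hnn := had_qf_nonneg (E 1) (E j) hE1idem hE1symm (hidem j hj) (hsymm j hj) v
    have hkr := hK 1 hs j hj
    rw [hkr] at hnn
    have h4 : (N⁻¹ • ∑ k ∈ Finset.range (s+1), q 1 j k • E k).mulVec v
        = (N⁻¹ * q 1 j j) • v := by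
      rw [Matrix.smul_mulVec, hvdef, Matrix.mulVec_mulVec, hcollapse _ j hj,
        Matrix.smul_mulVec, smul_smul]
    rw [h4, dotProduct_smul] at hnn
    have h5 : 0 ≤ (N⁻¹ * q 1 j j) * (v ⬝ᵥ v) := hnn
    nlinarith [inv_pos.mpr hN0, mul_pos (inv_pos.mpr hN0) hvv, h5, hvv]
  have hqnn : ∀ j, j ≤ s → ∀ k, k ≤ s → 0 ≤ q 1 j k := by
    intro j hj k hk
    by_cases h1 : j = k
    · subst h1; exact hqdiag j hj
    by_cases h2 : k = j + 1 ∨ j = k + 1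
    · exact le_of_lt (hQ.1 j hj k hk h2)
    · have h3 : j + 1 < k ∨ k + 1 < j := by omega
      rw [hQ.2 j hj k hk h3]
  -- the expansion of Hadamard powers
  have hrep : ∀ d, hadPow (E 1) d = ∑ j ∈ Finset.range (s+1), kcoef s q N d j • E j := by
    intro d
    induction d with
    | zero =>
      have h1 : (∑ j ∈ Finset.range (s+1), kcoef s q N 0 j • E j) = N • E 0 := by
        rw [Finset.sum_eq_single 0]
        · rfl
        · intro k hk hk0
          show (if k = 0 then N else 0) • E k = 0
          rw [if_neg hk0, zero_smul]
        · intro h; exact absurd (Finset.mem_range.mpr (by omega)) h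
      rw [h1, hE.zero_eq, smul_smul, mul_inv_cancel₀ hNne, one_smul]
      rfl
    | succ d ih =>
      show Matrix.hadamard (E 1) (hadPow (E 1) d) = _
      rw [ih, hadamard_sum_smul]
      calc ∑ j ∈ Finset.range (s+1), kcoef s q N d j • Matrix.hadamard (E 1) (E j)
          = ∑ j ∈ Finset.range (s+1), ∑ k ∈ Finset.range (s+1),
              (kcoef s q N d j * (N⁻¹ * q 1 j k)) • E k := by
            refine Finset.sum_congr rfl fun j hj => ?_
            rw [hK 1 hs j (Nat.lt_succ_iff.mp (Finset.mem_range.mp hj)), smul_smul,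
              Finset.smul_sum]
            refine Finset.sum_congr rfl fun k _ => ?_
            rw [smul_smul, hNdef]
            congr 1
            ring
        _ = ∑ k ∈ Finset.range (s+1), ∑ j ∈ Finset.range (s+1),
              (kcoef s q N d j * (N⁻¹ * q 1 j k)) • E k := Finset.sum_comm
        _ = ∑ k ∈ Finset.range (s+1), kcoef s q N (d+1) k • E k := by
            refine Finset.sum_congr rfl fun k _ => ?_
            rw [← Finset.sum_smul]
            congr 1
            show _ = N⁻¹ * ∑ j ∈ Finset.range (s + 1), kcoef s q N d j * q 1 j k
            rw [Finset.mul_sum]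
            exact Finset.sum_congr rfl fun j _ => by ring
  have hmul : ∀ d k, k ≤ s → hadPow (E 1) d * E k = kcoef s q N d k • E k := by
    intro d k hk
    rw [hrep d, hcollapse _ k hk]
  -- nonnegativity of the coefficients
  have hcnn : ∀ d k, k ≤ s → 0 ≤ kcoef s q N d k := by
    intro d
    induction d with
    | zero =>
      intro k _
      show 0 ≤ (if k = 0 then N else 0)
      split
      · exact le_of_lt hN0
      · exact le_refl 0
    | succ d ih =>
      intro k hk
      refine mul_nonneg (inv_nonneg.mpr (le_of_lt hN0)) (Finset.sum_nonneg fun j hj => ?_)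
      exact mul_nonneg (ih j (Nat.lt_succ_iff.mp (Finset.mem_range.mp hj)))
        (hqnn j (Nat.lt_succ_iff.mp (Finset.mem_range.mp hj)) k hk)
  -- a single walk step
  have hstep : ∀ d j k, j ≤ s → k ≤ s → 0 < q 1 j k → 0 < kcoef s q N d j →
      0 < kcoef s q N (d+1) k := by
    intro d j k hj hk hq hc
    refine mul_pos (inv_pos.mpr hN0) (Finset.sum_pos' ?_ ?_)
    · intro i hi
      exact mul_nonneg (hcnn d i (Nat.lt_succ_iff.mp (Finset.mem_range.mp hi)))
        (hqnn i (Nat.lt_succ_iff.mp (Finset.mem_range.mp hi)) k hk)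
    · exact ⟨j, Finset.mem_range.mpr (by omega), mul_pos hc hq⟩
  have hqup : ∀ k, k + 1 ≤ s → 0 < q 1 k (k+1) :=
    fun k h => hQ.1 k (by omega) (k+1) h (Or.inl rfl)
  have hqdn : ∀ k, k + 1 ≤ s → 0 < q 1 (k+1) k :=
    fun k h => hQ.1 (k+1) h k (by omega) (Or.inr rfl)
  have hqloop : 0 < q 1 (l+1) (l+1) :=
    lt_of_le_of_ne (hqdiag (l+1) (by omega)) (Ne.symm hmax)
  have lemA : ∀ k, k ≤ s → 0 < kcoef s q N k k := by
    intro k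
    induction k with
    | zero =>
      intro _
      show 0 < (if (0:ℕ) = 0 then N else 0)
      rw [if_pos rfl]; exact hN0
    | succ n ih =>
      intro h
      exact hstep n n (n+1) (by omega) h (hqup n h) (ih (by omega))
  have lemB : 0 < kcoef s q N (l+2) (l+1) :=
    hstep (l+1) (l+1) (l+1) (by omega) (by omega) hqloop (lemA (l+1) (by omega))
  have lemC : ∀ t, l+2+t ≤ s → 0 < kcoef s q N (l+2+t) (l+1+t) := by
    intro t
    induction t with
    | zero => intro _; exact lemB
    | succ t ih =>
      intro h
      have hq1 := hqup (l+1+t) (by omega)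
      have e0 : l + 1 + t + 1 = l + 2 + t := by omega
      rw [e0] at hq1
      have h1 := hstep (l+2+t) (l+1+t) (l+2+t) (by omega) (by omega)
        hq1 (ih (by omega))
      have e : l + 1 + (t+1) = l + 2 + t := by omega
      rw [e]
      exact h1
  have lemD : ∀ t, t ≤ l + 1 → 0 < kcoef s q N (l+2+t) (l+1-t) := by
    intro t
    induction t with
    | zero => intro _; exact lemB
    | succ t ih =>
      intro ht
      have h1 : 0 < kcoef s q N (l+2+t) (l+1-t) := ih (by omega)
      have e : l + 1 - t = (l + 1 - (t+1)) + 1 := by omega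
      rw [e] at h1
      exact hstep (l+2+t) ((l+1-(t+1))+1) (l+1-(t+1)) (by omega) (by omega)
        (hqdn _ (by omega)) h1
  have hsel : ∀ k, k ≤ s → ∃ d, d ≤ s ∧ d % 2 = s % 2 ∧ 0 < kcoef s q N d k := by
    intro k hk
    by_cases hp : k % 2 = s % 2
    · exact ⟨k, hk, hp, lemA k hk⟩
    by_cases hkl : l + 1 ≤ k
    · refine ⟨k+1, by omega, by omega, ?_⟩
      have h1 := lemC (k - (l+1)) (by omega)
      have e1 : l + 2 + (k - (l+1)) = k + 1 := by omega
      have e2 : l + 1 + (k - (l+1)) = k := by omega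
      rwa [e1, e2] at h1
    · refine ⟨l + 2 + (l + 1 - k), by omega, by omega, ?_⟩
      have h1 := lemD (l+1-k) (by omega)
      have e2 : l + 1 - (l + 1 - k) = k := by omega
      rwa [e2] at h1
  -- Geometry: coordinates from the column space of E 1
  set V : Submodule ℝ (X → ℝ) := LinearMap.range (Matrix.mulVecLin (E 1)) with hVdef
  set m : ℕ := Module.finrank ℝ V with hmdef
  have hmrank : m = (E 1).rank := rfl
  let b : Module.Basis (Fin m) ℝ V := Module.finBasis ℝ V
  have hu : ∀ x : X, (fun z => E 1 x z) ∈ V := by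
    intro x
    refine ⟨Pi.single x 1, ?_⟩
    rw [Matrix.mulVecLin_apply, Matrix.mulVec_single]
    funext z
    rw [Pi.smul_apply, op_smul_eq_mul, mul_one]
    exact congrFun (congrFun hE1symm x) z
  set w : X → Fin m → ℝ := fun x i => b.repr ⟨fun z => E 1 x z, hu x⟩ i with hwdef
  have hwe : ∀ x z, E 1 x z = ∑ i, w x i * (b i : X → ℝ) z := by
    intro x z
    have h1 := congrArg (fun (v : V) => (v : X → ℝ) z)
      (b.sum_repr ⟨fun z' => E 1 x z', hu x⟩)
    simp only at h1
    rw [← h1]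
    rw [show ((↑(∑ i, (b.repr ⟨fun z' => E 1 x z', hu x⟩) i • b i) : X → ℝ))
        = ∑ i, (b.repr ⟨fun z' => E 1 x z', hu x⟩) i • (b i : X → ℝ) from by
      push_cast; rfl]
    simp [Finset.sum_apply, hwdef]
  -- constant diagonal of E 1
  obtain ⟨qc, hqc⟩ := hE.mem_span 1 hs
  have hAdiag : ∀ k, 1 ≤ k → k ≤ s → ∀ x, A k x x = 0 := by
    intro k h1 hk x
    have hsum : ∑ i ∈ Finset.range (s+1), A i x x = 1 := by
      have h2 := congrFun (congrFun hA.sum_eq x) x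
      rw [Matrix.sum_apply] at h2
      simpa [allOnes] using h2
    have h0 : A 0 x x = 1 := by rw [hA.eq_one]; simp
    have hterm : ∀ i ∈ (Finset.range (s+1)).erase 0, 0 ≤ A i x x := by
      intro i hi
      rcases hA.zero_one i (Nat.lt_succ_iff.mp (Finset.mem_range.mp (Finset.mem_of_mem_erase hi))) x x with h|h
      · rw [h]
      · rw [h]; exact zero_le_one
    have hrest : ∑ i ∈ (Finset.range (s+1)).erase 0, A i x x = 0 := by
      have h3 : A 0 x x + ∑ i ∈ (Finset.range (s+1)).erase 0, A i x x = 1 := by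
        rw [Finset.add_sum_erase _ (fun i => A i x x) (Finset.mem_range.mpr (Nat.succ_pos s))]
        exact hsum
      rw [h0] at h3
      linarith
    have hle : A k x x ≤ 0 := by
      rw [← hrest]
      exact Finset.single_le_sum hterm (Finset.mem_erase.mpr ⟨by omega, Finset.mem_range.mpr (by omega)⟩)
    have hge : 0 ≤ A k x x := by
      rcases hA.zero_one k hk x x with h|h
      · rw [h]
      · rw [h]; exact zero_le_one
    linarith
  have hdiag : ∀ x, E 1 x x = qc 0 := by
    intro x
    have h1 := congrFun (congrFun hqc x) x
    rw [Matrix.sum_apply] at h1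
    rw [h1, Finset.sum_eq_single 0]
    · have h0 : A 0 x x = 1 := by rw [hA.eq_one]; simp
      simp [h0]
    · intro k hk hk0
      have hz := hAdiag k (by omega) (Nat.lt_succ_iff.mp (Finset.mem_range.mp hk)) x
      simp [hz]
    · intro h; exact absurd (Finset.mem_range.mpr (by omega)) h
  have hE1ne : E 1 ≠ 0 := by
    intro h
    have hkr := hK 1 hs 1 hs
    rw [h] at hkr
    have hz : Matrix.hadamard (0 : Matrix X X ℝ) 0 = 0 := by
      ext x y; simp [Matrix.hadamard_apply]
    rw [hz] at hkr
    have h2 : (0 : Matrix X X ℝ) * E 0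
        = (N⁻¹ • ∑ k ∈ Finset.range (s+1), q 1 1 k • E k) * E 0 := by rw [← hkr]
    rw [Matrix.zero_mul, Matrix.smul_mul, hcollapse _ 0 (by omega)] at h2
    have hq : 0 < q 1 1 0 := hQ.1 1 hs 0 (by omega) (Or.inr rfl)
    have h3 := h2.symm
    rw [smul_smul, smul_eq_zero] at h3
    rcases h3 with h3 | h3
    · exact absurd h3 (by positivity)
    · exact hE0ne h3
  have hc0pos : 0 < qc 0 := by
    have hle0 : 0 ≤ qc 0 := by
      rw [← hdiag x₀, sym_idem_expand hE1idem hE1symm x₀ x₀]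
      exact Finset.sum_nonneg fun z _ => mul_self_nonneg _
    rcases lt_or_eq_of_le hle0 with h | h
    · exact h
    · exfalso
      apply hE1ne
      ext x z
      have h1 : ∑ z', E 1 x z' * E 1 x z' = 0 := by
        rw [← sym_idem_expand hE1idem hE1symm x x, hdiag x, ← h]
      have h2 : ∀ z' ∈ Finset.univ, E 1 x z' * E 1 x z' = 0 := by
        intro z' _
        have := Finset.sum_eq_zero_iff_of_nonneg (fun i (_ : i ∈ Finset.univ) => mul_self_nonneg (E 1 x i))
        exact (this.mp h1) z' (Finset.mem_univ _)
      have h3 := h2 z (Finset.mem_univ z)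
      rw [Matrix.zero_apply]
      exact mul_self_eq_zero.mp h3
  -- columns of E 1 are linear in the coordinates
  have hcol1 : ∀ y, (fun x => E 1 x y) ∈ monSp w 1 := by
    intro y
    have h1 : (fun x => E 1 x y) = ∑ i, ((b i : X → ℝ) y) • (fun x => w x i) := by
      funext x
      rw [hwe x y]
      rw [Finset.sum_apply]
      refine Finset.sum_congr rfl fun i _ => ?_
      simp [mul_comm]
    rw [h1]
    exact Submodule.sum_mem _ fun i _ => Submodule.smul_mem _ _ (monSp_coord i)
  -- the constant function 1 is quadratic in the coordinates
  have hconst2 : (fun _ : X => (1:ℝ)) ∈ monSp w 2 := by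
    have hrep1 : (fun _ : X => qc 0)
        = ∑ i, ∑ j, (∑ z, (b i : X → ℝ) z * (b j : X → ℝ) z) • (fun x => w x i * w x j) := by
      funext x
      calc qc 0 = ∑ z, E 1 x z * E 1 x z := by
            rw [← hdiag x, sym_idem_expand hE1idem hE1symm x x]
        _ = ∑ z, (∑ i, w x i * (b i : X → ℝ) z) * (∑ j, w x j * (b j : X → ℝ) z) := by
            refine Finset.sum_congr rfl fun z _ => ?_
            rw [← hwe x z]
        _ = ∑ z, ∑ i, ∑ j, (w x i * (b i : X → ℝ) z) * (w x j * (b j : X → ℝ) z) := by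
            refine Finset.sum_congr rfl fun z _ => ?_
            rw [Finset.sum_mul_sum]
        _ = ∑ i, ∑ z, ∑ j, (w x i * (b i : X → ℝ) z) * (w x j * (b j : X → ℝ) z) :=
            Finset.sum_comm
        _ = ∑ i, ∑ j, ∑ z, (w x i * (b i : X → ℝ) z) * (w x j * (b j : X → ℝ) z) :=
            Finset.sum_congr rfl fun i _ => Finset.sum_comm
        _ = (∑ i, ∑ j, (∑ z, (b i : X → ℝ) z * (b j : X → ℝ) z) • (fun x' : X => w x' i * w x' j)) x := by
            simp only [Finset.sum_apply, Pi.smul_apply, smul_eq_mul]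
            refine Finset.sum_congr rfl fun i _ => Finset.sum_congr rfl fun j _ => ?_
            rw [Finset.sum_mul]
            exact Finset.sum_congr rfl fun z _ => by ring
    have h2 : (fun _ : X => qc 0) ∈ monSp w 2 := by
      rw [hrep1]
      refine Submodule.sum_mem _ fun i _ => Submodule.sum_mem _ fun j _ => ?_
      refine Submodule.smul_mem _ _ ?_
      have := monSp_mul (monSp_coord (w := w) i) (monSp_coord (w := w) j)
      exact this
    have h3 : (fun _ : X => (1:ℝ)) = (qc 0)⁻¹ • (fun _ : X => qc 0) := by
      funext x
      simp [inv_mul_cancel₀ (ne_of_gt hc0pos)]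
    rw [h3]
    exact Submodule.smul_mem _ _ h2
  -- columns of Hadamard powers of the right parity are degree-s monomial combos
  have hhadcol : ∀ d, d ≤ s → d % 2 = s % 2 → ∀ y,
      (fun x => hadPow (E 1) d x y) ∈ monSp w s := by
    intro d hd hp y
    have key : (fun x => hadPow (E 1) d x y)
        = ((fun x => E 1 x y) ^ d) * ((fun _ : X => (1:ℝ)) ^ ((s - d)/2)) := by
      funext x
      simp [hadPow_apply, Pi.mul_apply, Pi.pow_apply]
    rw [key]
    have hA1 := monSp_pow (hcol1 y) d
    have hB1 := monSp_pow hconst2 ((s - d)/2)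
    have h2 := monSp_mul hA1 hB1
    have e : 1 * d + 2 * ((s - d)/2) = s := by omega
    rwa [e] at h2
  -- columns of each E k are degree-s monomial combos
  have hEcol : ∀ k, k ≤ s → ∀ y, (fun x => E k x y) ∈ monSp w s := by
    intro k hk y
    obtain ⟨d, hds, hdp, hdc⟩ := hsel k hk
    set vv : X → ℝ := (kcoef s q N d k)⁻¹ • (E k).mulVec (Pi.single y 1) with hvvdef
    have hmv : (hadPow (E 1) d).mulVec vv = fun x => E k x y := by
      rw [hvvdef, Matrix.mulVec_smul, Matrix.mulVec_mulVec, hmul d k hk,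
        Matrix.smul_mulVec, smul_smul, inv_mul_cancel₀ (ne_of_gt hdc), one_smul,
        Matrix.mulVec_single]
      funext x
      rw [Pi.smul_apply, op_smul_eq_mul, mul_one, Matrix.col_apply]
    have hexp : (hadPow (E 1) d).mulVec vv
        = ∑ y', vv y' • (fun x => hadPow (E 1) d x y') := by
      funext x
      rw [Finset.sum_apply]
      simp only [Matrix.mulVec, dotProduct, Pi.smul_apply, smul_eq_mul]
      exact Finset.sum_congr rfl fun y' _ => by ring
    rw [← hmv, hexp]
    exact Submodule.sum_mem _ fun y' _ => Submodule.smul_mem _ _ (hhadcol d hds hdp y')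
  -- hence all delta functions are, so the space is everything
  have htop : monSp w s = ⊤ := by
    rw [eq_top_iff, ← (Pi.basisFun ℝ X).span_eq]
    refine Submodule.span_le.2 ?_
    rintro - ⟨y, rfl⟩
    rw [Pi.basisFun_apply]
    have h1 : (Pi.single y (1:ℝ)) = fun x => (1 : Matrix X X ℝ) x y := by
      funext x
      rw [Matrix.one_apply, Pi.single_apply]
    rw [h1, ← hE.sum_eq]
    have h2 : (fun x => (∑ i ∈ Finset.range (s+1), E i) x y)
        = ∑ i ∈ Finset.range (s+1), (fun x => E i x y) := by
      funext x
      rw [Matrix.sum_apply, Finset.sum_apply]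
    rw [h2]
    exact Submodule.sum_mem _ fun i hi =>
      hEcol i (Nat.lt_succ_iff.mp (Finset.mem_range.mp hi)) y
  -- finish by counting dimensions
  have hfr : Fintype.card X = Module.finrank ℝ (X → ℝ) := (Module.finrank_pi ℝ).symm
  rw [hfr, ← hmrank]
  calc Module.finrank ℝ (X → ℝ)
      = Module.finrank ℝ (⊤ : Submodule ℝ (X → ℝ)) := (finrank_top ℝ _).symm
    _ = Module.finrank ℝ (monSp w s) := by rw [htop]
    _ ≤ (m + s - 1).choose s := monSp_finrank w s
end

section
/- Let (X, R) be an s-class Q-polynomial association scheme with m = rank(E_1) which is Q-bipartite, i.e., q_{1,i}^i = 0 for all 0 ≤ i ≤ s. Then |X| ≤ 2·C(m+s-2, s-1). -/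
set_option linter.unusedSectionVars false
set_option maxHeartbeats 1000000
set_option synthInstance.maxHeartbeats 400000

open Matrix Finset

/- ### Auxiliary lemmas -/

lemma symm_prod_expand : ∀ (N : ℕ) (B : Finset ℝ), B.card = N → (∀ β ∈ B, -β ∈ B) →
    ∃ a : ℕ → ℝ, (∀ k, B.card < k → a k = 0) ∧ (∀ k, k % 2 ≠ B.card % 2 → a k = 0) ∧
      ∀ t : ℝ, ∏ β ∈ B, (t - β) = ∑ k ∈ Finset.range (B.card + 1), a k * t ^ k := by
  intro N
  induction N using Nat.strong_induction_on with
  | _ N ih =>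
    intro B hcard hsymm
    rcases B.eq_empty_or_nonempty with rfl | hne
    · refine ⟨fun k => if k = 0 then 1 else 0, ?_, ?_, ?_⟩
      · intro k hk; simp only [card_empty] at hk
        have hk0 : k ≠ 0 := by omega
        simp [hk0]
      · intro k hk; simp only [card_empty, Nat.zero_mod] at hk
        have hk0 : k ≠ 0 := by omega
        simp [hk0]
      · intro t; simp
    · have hc1 : 1 ≤ B.card := card_pos.mpr hne
      by_cases h0 : (0:ℝ) ∈ B
      · -- remove 0
        set B' := B.erase 0 with hB'
        have hcB : B.card = B'.card + 1 := by
          have := card_erase_of_mem h0; rw [← hB'] at this; omega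
        have hsymm' : ∀ β ∈ B', -β ∈ B' := by
          intro β hβ
          have h1 := mem_erase.mp hβ
          exact mem_erase.mpr ⟨by simpa using h1.1, hsymm β h1.2⟩
        obtain ⟨a, ha1, ha2, ha3⟩ := ih B'.card (by omega) B' rfl hsymm'
        refine ⟨fun k => if k = 0 then 0 else a (k-1), ?_, ?_, ?_⟩
        · intro k hk
          rw [hcB] at hk
          have hk0 : k ≠ 0 := by omega
          simp only [hk0, if_false]
          exact ha1 (k-1) (by omega)
        · intro k hk
          rw [hcB] at hk
          rcases Nat.eq_zero_or_pos k with rfl | hkpos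
          · simp
          · have hk0 : k ≠ 0 := by omega
            simp only [hk0, if_false]
            exact ha2 (k-1) (by omega)
        · intro t
          have hpe : ∏ β ∈ B, (t - β) = (t - 0) * ∏ β ∈ B', (t - β) :=
            (Finset.mul_prod_erase B _ h0).symm
          rw [hpe, ha3 t, hcB,
            Finset.sum_range_succ' (fun k => (if k = 0 then (0:ℝ) else a (k-1)) * t ^ k) (B'.card + 1)]
          simp only [Nat.succ_ne_zero, if_false, Nat.add_sub_cancel, eq_self_iff_true, if_true,
            zero_mul, add_zero, sub_zero, Finset.mul_sum]
          exact Finset.sum_congr rfl fun k _ => by ring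
      · -- remove a pair β0, -β0
        obtain ⟨β0, hβ0⟩ := hne
        have hnegmem : -β0 ∈ B := hsymm β0 hβ0
        have hβ0ne : β0 ≠ 0 := fun h => h0 (h ▸ hβ0)
        have hdiff : -β0 ≠ β0 := by
          intro h; apply hβ0ne; linarith [h]
        set B' := (B.erase β0).erase (-β0) with hB'
        have hmem2 : -β0 ∈ B.erase β0 := mem_erase.mpr ⟨hdiff, hnegmem⟩
        have hcB : B.card = B'.card + 2 := by
          have h1 := card_erase_of_mem hmem2
          have h2 := card_erase_of_mem hβ0
          rw [← hB'] at h1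
          have h3 : 1 ≤ (B.erase β0).card := card_pos.mpr ⟨_, hmem2⟩
          omega
        have hsymm' : ∀ β ∈ B', -β ∈ B' := by
          intro β hβ
          rw [hB'] at hβ ⊢
          simp only [mem_erase] at hβ ⊢
          refine ⟨?_, ?_, hsymm β hβ.2.2⟩
          · intro h; exact hβ.2.1 (by linarith [h])
          · intro h; exact hβ.1 (by linarith [h])
        obtain ⟨a, ha1, ha2, ha3⟩ := ih B'.card (by omega) B' rfl hsymm'
        refine ⟨fun k => (if 2 ≤ k then a (k-2) else 0) - β0^2 * a k, ?_, ?_, ?_⟩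
        · intro k hk
          rw [hcB] at hk
          have e1 : a k = 0 := ha1 k (by omega)
          rcases Nat.lt_or_ge k 2 with h | h
          · simp [Nat.not_le.mpr h, e1]
          · have e2 : a (k-2) = 0 := ha1 (k-2) (by omega)
            simp [h, e2, e1]
        · intro k hk
          rw [hcB] at hk
          have e1 : a k = 0 := ha2 k (by omega)
          rcases Nat.lt_or_ge k 2 with h | h
          · simp [Nat.not_le.mpr h, e1]
          · have e2 : a (k-2) = 0 := ha2 (k-2) (by omega)
            simp [h, e2, e1]
        · intro t
          have hsplit : ∏ β ∈ B, (t - β) = (t - β0) * ((t - (-β0)) * ∏ β ∈ B', (t - β)) := by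
            rw [hB', Finset.mul_prod_erase (B.erase β0) _ hmem2, Finset.mul_prod_erase B _ hβ0]
          rw [hsplit, ha3 t]
          have hexp : (t - β0) * ((t - (-β0)) * ∑ k ∈ range (B'.card + 1), a k * t ^ k)
              = ∑ k ∈ range (B'.card + 1), a k * t ^ (k+2)
                - β0^2 * ∑ k ∈ range (B'.card + 1), a k * t^k := by
            rw [Finset.mul_sum, Finset.mul_sum, Finset.mul_sum, ← Finset.sum_sub_distrib]
            exact Finset.sum_congr rfl fun k _ => by ring
          rw [hexp, hcB]
          have key : ∑ k ∈ range (B'.card + 2 + 1), ((if 2 ≤ k then a (k-2) else 0) - β0^2 * a k) * t ^ k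
              = ∑ k ∈ range (B'.card + 2 + 1), (if 2 ≤ k then a (k-2) else 0) * t^k
                - β0^2 * ∑ k ∈ range (B'.card + 2 + 1), a k * t^k := by
            rw [Finset.mul_sum, ← Finset.sum_sub_distrib]
            exact Finset.sum_congr rfl fun k _ => by ring
          rw [key]
          congr 1
          · -- shift by two
            rw [show B'.card + 2 + 1 = B'.card + 1 + 1 + 1 by omega,
              Finset.sum_range_succ' (fun k => (if 2 ≤ k then a (k-2) else 0) * t ^ k) (B'.card + 1 + 1),
              Finset.sum_range_succ' (fun k => (if 2 ≤ (k+1) then a (k+1-2) else 0) * t ^ (k+1)) (B'.card + 1)]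
            rw [if_neg (by omega : ¬ 2 ≤ 0), if_neg (by omega : ¬ 2 ≤ 0 + 1)]
            simp only [zero_mul, add_zero]
            refine Finset.sum_congr rfl fun k _ => ?_
            rw [if_pos (by omega : 2 ≤ k + 1 + 1)]
            try rw [(by omega : k + 1 + 1 - 2 = k)]
            try ring
          · -- extend range by zeros
            congr 1
            apply Finset.sum_subset
            · intro k hk; simp only [mem_range] at hk ⊢; omega
            · intro k _ hk
              simp only [mem_range] at hk
              simp [ha1 k (by omega)]

section SpanDeg

variable {Z : Type*} [Fintype Z] {ι : Type*} [Fintype ι]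

/-- Monomial function associated to a multiset of indices. -/
def monF (c : Z → ι → ℝ) {k : ℕ} (μ : Sym ι k) : Z → ℝ :=
  fun z => ((μ : Multiset ι).map (c z)).prod

lemma monF_cons (c : Z → ι → ℝ) {k : ℕ} (i : ι) (μ : Sym ι k) (z : Z) :
    monF c (i ::ₛ μ) z = c z i * monF c μ z := by
  simp [monF, Sym.coe_cons]

lemma mul_lin_mem (c : Z → ι → ℝ) (w : ι → ℝ) {k : ℕ} {g : Z → ℝ}
    (hg : g ∈ Submodule.span ℝ (Set.range (monF c (k := k)))) :
    (fun z => (∑ i, w i * c z i) * g z) ∈ Submodule.span ℝ (Set.range (monF c (k := k+1))) := by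
  induction hg using Submodule.span_induction with
  | mem g hgm =>
    obtain ⟨μ, rfl⟩ := hgm
    have hfe : (fun z => (∑ i, w i * c z i) * monF c μ z)
        = ∑ i : ι, w i • monF c (i ::ₛ μ) := by
      funext z
      rw [Finset.sum_apply, Finset.sum_mul]
      exact Finset.sum_congr rfl fun i _ => by rw [Pi.smul_apply, monF_cons, smul_eq_mul]; ring
    rw [hfe]
    exact Submodule.sum_mem _ fun i _ =>
      Submodule.smul_mem _ _ (Submodule.subset_span ⟨i ::ₛ μ, rfl⟩)
  | zero =>
    have : (fun z => (∑ i, w i * c z i) * (0 : Z → ℝ) z) = 0 := by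
      funext z; simp
    rw [this]; exact Submodule.zero_mem _
  | add g h _ _ hg' hh' =>
    have : (fun z => (∑ i, w i * c z i) * (g + h) z)
        = (fun z => (∑ i, w i * c z i) * g z) + (fun z => (∑ i, w i * c z i) * h z) := by
      funext z; simp [mul_add]
    rw [this]; exact Submodule.add_mem _ hg' hh'
  | smul r g _ hg' =>
    have : (fun z => (∑ i, w i * c z i) * (r • g) z)
        = r • (fun z => (∑ i, w i * c z i) * g z) := by
      funext z; simp [Pi.smul_apply]; ring
    rw [this]; exact Submodule.smul_mem _ _ hg'

lemma pad_mem (c : Z → ι → ℝ) (hnorm : ∀ z, ∑ i, (c z i)^2 = 1) {k : ℕ} {g : Z → ℝ}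
    (hg : g ∈ Submodule.span ℝ (Set.range (monF c (k := k)))) :
    g ∈ Submodule.span ℝ (Set.range (monF c (k := k+2))) := by
  induction hg using Submodule.span_induction with
  | mem g hgm =>
    obtain ⟨μ, rfl⟩ := hgm
    have hfe : monF c μ = ∑ i : ι, monF c (i ::ₛ i ::ₛ μ) := by
      funext z
      rw [Finset.sum_apply]
      have h1 : ∀ i : ι, monF c (i ::ₛ i ::ₛ μ) z = (c z i)^2 * monF c μ z := by
        intro i; rw [monF_cons, monF_cons]; ring
      rw [Finset.sum_congr rfl fun i _ => h1 i, ← Finset.sum_mul, hnorm z, one_mul]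
    rw [hfe]
    exact Submodule.sum_mem _ fun i _ => Submodule.subset_span ⟨i ::ₛ i ::ₛ μ, rfl⟩
  | zero => exact Submodule.zero_mem _
  | add g h _ _ hg' hh' => exact Submodule.add_mem _ hg' hh'
  | smul r g _ hg' => exact Submodule.smul_mem _ _ hg'

lemma pow_lin_mem (c : Z → ι → ℝ) (w : ι → ℝ) (k : ℕ) :
    (fun z => (∑ i, w i * c z i)^k) ∈ Submodule.span ℝ (Set.range (monF c (k := k))) := by
  induction k with
  | zero =>
    have : (fun z : Z => (∑ i, w i * c z i)^0) = monF c (Sym.nil (α := ι)) := by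
      funext z; simp [monF]
    rw [this]; exact Submodule.subset_span ⟨_, rfl⟩
  | succ k ih =>
    have : (fun z : Z => (∑ i, w i * c z i)^(k+1))
        = (fun z => (∑ i, w i * c z i) * (fun z => (∑ i, w i * c z i)^k) z) := by
      funext z; ring
    rw [this]
    exact mul_lin_mem c w ih

lemma pow_lin_mem_pad (c : Z → ι → ℝ) (hnorm : ∀ z, ∑ i, (c z i)^2 = 1) (w : ι → ℝ)
    {k K : ℕ} (hkK : k ≤ K) (hpar : k % 2 = K % 2) :
    (fun z => (∑ i, w i * c z i)^k) ∈ Submodule.span ℝ (Set.range (monF c (k := K))) := by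
  obtain ⟨j, rfl⟩ : ∃ j, K = k + 2*j := ⟨(K - k)/2, by omega⟩
  clear hkK hpar
  induction j with
  | zero => exact pow_lin_mem c w k
  | succ j ih =>
    have h2 : k + 2*(j+1) = (k + 2*j) + 2 := by omega
    rw [h2]
    exact pad_mem c hnorm ih

end SpanDeg

/-- The polynomials representing the idempotents entrywise. -/
noncomputable def phiP (n q0 : ℝ) (bq cq : ℕ → ℝ) : ℕ → Polynomial ℝ
  | 0 => Polynomial.C n⁻¹
  | 1 => Polynomial.C q0 * Polynomial.X
  | (j+2) => Polynomial.C (n * q0 / bq (j+1)) * Polynomial.X * phiP n q0 bq cq (j+1)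
      - Polynomial.C (cq (j+1) / bq (j+1)) * phiP n q0 bq cq j

lemma coeff_C_mul_X_mul (a : ℝ) (p : Polynomial ℝ) (k : ℕ) :
    (Polynomial.C a * Polynomial.X * p).coeff k
      = a * (if k = 0 then 0 else p.coeff (k-1)) := by
  rw [mul_assoc, Polynomial.coeff_C_mul]
  cases k with
  | zero => simp [Polynomial.mul_coeff_zero]
  | succ k => simp [Polynomial.coeff_X_mul]

/-- Let `(X, R)` be an `s`-class `Q`-polynomial scheme with `m = rank (E 1)` which is
`Q`-bipartite, i.e. `q 1 i i = 0` for all `0 ≤ i ≤ s`.  Then `|X| ≤ 2 C(m + s - 2, s - 1)`. -/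
theorem card_le_QPoly_bipartite (X : Type*) [Fintype X] [DecidableEq X] (s : ℕ) (hs : 1 ≤ s)
    (A E : ℕ → Matrix X X ℝ) (q : ℕ → ℕ → ℕ → ℝ)
    (hA : IsAssocScheme s A) (hE : IsPrimIdem s A E)
    (hK : IsKrein s E q) (hQ : IsQPoly s q)
    (hbip : ∀ i ≤ s, q 1 i i = 0) :
    Fintype.card X ≤ 2 * ((E 1).rank + s - 2).choose (s - 1) := by
  classical
  -- X is nonempty
  have hX : Nonempty X := by
    by_contra h
    have hIE : IsEmpty X := not_nonempty_iff.mp h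
    exact hA.nonempty 0 (Nat.zero_le _) (by ext x y; exact isEmptyElim x)
  have hn0 : 0 < Fintype.card X := Fintype.card_pos_iff.mpr hX
  have hnR : (0:ℝ) < (Fintype.card X : ℝ) := by exact_mod_cast hn0
  have hnne : (Fintype.card X : ℝ) ≠ 0 := ne_of_gt hnR
  -- basic class structure
  have hA01 := hA.zero_one
  have hsumA : ∀ x y : X, ∑ i ∈ Finset.range (s+1), A i x y = 1 := by
    intro x y
    have h1 := congrFun (congrFun hA.sum_eq x) y
    rw [Matrix.sum_apply] at h1
    simpa [allOnes] using h1
  have hAuniq : ∀ x y : X, ∀ i j, i ≤ s → j ≤ s → A i x y = 1 → A j x y = 1 → i = j := by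
    intro x y i j hi hj h1 h2
    by_contra hij
    have hsub : ({i, j} : Finset ℕ) ⊆ Finset.range (s+1) := by
      intro t ht; simp only [Finset.mem_insert, Finset.mem_singleton] at ht
      rcases ht with rfl | rfl <;> (rw [Finset.mem_range]; omega)
    have h2le : (2:ℝ) ≤ ∑ t ∈ Finset.range (s+1), A t x y := by
      have hp : ∑ t ∈ ({i,j} : Finset ℕ), A t x y = 2 := by
        rw [Finset.sum_pair hij, h1, h2]; norm_num
      rw [← hp]
      apply Finset.sum_le_sum_of_subset_of_nonneg hsub
      intro t ht _
      rcases hA01 t (Nat.lt_succ_iff.mp (Finset.mem_range.mp ht)) x y with h | h <;> rw [h] <;> norm_num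
    rw [hsumA x y] at h2le; norm_num at h2le
  have hclsE : ∀ x y : X, ∃ i, i ≤ s ∧ A i x y = 1 := by
    intro x y
    by_contra h
    push_neg at h
    have hz : ∑ i ∈ Finset.range (s+1), A i x y = 0 := by
      apply Finset.sum_eq_zero
      intro i hi
      have hi' : i ≤ s := Nat.lt_succ_iff.mp (Finset.mem_range.mp hi)
      rcases hA01 i hi' x y with h0 | h1
      · exact h0
      · exact absurd h1 (h i hi')
    rw [hsumA] at hz; norm_num at hz
  obtain ⟨cls, hcls⟩ : ∃ cls : X → X → ℕ, ∀ x y, cls x y ≤ s ∧ A (cls x y) x y = 1 :=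
    ⟨fun x y => (hclsE x y).choose, fun x y => (hclsE x y).choose_spec⟩
  have hclsle : ∀ x y, cls x y ≤ s := fun x y => (hcls x y).1
  have hclsA : ∀ x y, A (cls x y) x y = 1 := fun x y => (hcls x y).2
  have hcls_of : ∀ {x y : X} {i}, i ≤ s → A i x y = 1 → cls x y = i := by
    intro x y i hi h
    exact hAuniq x y _ i (hclsle x y) hi (hclsA x y) h
  have hcls_diag : ∀ x, cls x x = 0 := by
    intro x; exact hcls_of (Nat.zero_le _) (by rw [hA.eq_one]; simp [Matrix.one_apply])
  have hcls_eq_zero : ∀ x y : X, cls x y = 0 → x = y := by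
    intro x y h
    have h1 := hclsA x y; rw [h, hA.eq_one] at h1
    by_contra hxy
    rw [Matrix.one_apply_ne hxy] at h1; norm_num at h1
  have hApos : ∀ i ≤ s, ∀ x y : X, 0 ≤ A i x y := by
    intro i hi x y; rcases hA01 i hi x y with h|h <;> rw [h] <;> norm_num
  have hAoff : ∀ i ≤ s, ∀ x y : X, i ≠ cls x y → A i x y = 0 := by
    intro i hi x y hne
    rcases hA01 i hi x y with h|h
    · exact h
    · exact absurd (hAuniq x y i _ hi (hclsle x y) h (hclsA x y)).symm (Ne.symm hne)
  have hcls_symm : ∀ x y : X, cls y x = cls x y := by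
    intro x y
    apply hcls_of (hclsle x y)
    have h1 := hA.symm _ (hclsle x y)
    calc A (cls x y) y x = (A (cls x y))ᵀ x y := rfl
    _ = A (cls x y) x y := by rw [h1]
    _ = 1 := hclsA x y
  -- values of matrices in the span of A
  have hval_span : ∀ (M : Matrix X X ℝ) (v : ℕ → ℝ),
      M = ∑ k ∈ Finset.range (s+1), v k • A k → ∀ x y, M x y = v (cls x y) := by
    intro M v hM x y
    rw [hM, Matrix.sum_apply, Finset.sum_eq_single (cls x y)]
    · rw [Matrix.smul_apply, hclsA, smul_eq_mul, mul_one]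
    · intro i hi hne
      rw [Matrix.smul_apply, hAoff i (Nat.lt_succ_iff.mp (Finset.mem_range.mp hi)) x y hne,
        smul_eq_mul, mul_zero]
    · intro h; exact absurd (Finset.mem_range.mpr (Nat.lt_succ_iff.mpr (hclsle x y))) h
  obtain ⟨vE, hvE⟩ := hE.mem_span 1 hs
  have hval1 : ∀ x y : X, E 1 x y = vE (cls x y) := hval_span _ _ hvE
  -- Krein multiplication identity
  have hKmul : ∀ j ≤ s, ∀ k ≤ s, (Matrix.hadamard (E 1) (E j)) * E k
      = ((Fintype.card X : ℝ)⁻¹ * q 1 j k) • E k := by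
    intro j hj k hk
    rw [hK 1 hs j hj, Matrix.smul_mul, Finset.sum_mul]
    have h1 : ∀ t ∈ Finset.range (s+1), (q 1 j t • E t) * E k
        = if t = k then q 1 j t • E k else 0 := by
      intro t ht
      rw [Matrix.smul_mul, hE.orth_idem t (Nat.lt_succ_iff.mp (Finset.mem_range.mp ht)) k hk]
      split_ifs with h
      · subst h; rfl
      · exact smul_zero _
    rw [Finset.sum_congr rfl h1, Finset.sum_ite_eq' (Finset.range (s+1)) k (fun t => q 1 j t • E k),
      if_pos (Finset.mem_range.mpr (Nat.lt_succ_iff.mpr hk)), smul_smul]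
  -- trace of triple products
  have htr3 : ∀ j ≤ s, ∀ k ≤ s,
      Matrix.trace ((Matrix.hadamard (E 1) (E j)) * E k)
        = ∑ x : X, ∑ y : X, E 1 x y * E j x y * E k x y := by
    intro j hj k hk
    rw [Matrix.trace]
    simp only [Matrix.diag, Matrix.mul_apply, Matrix.hadamard_apply]
    apply Finset.sum_congr rfl; intro x _
    apply Finset.sum_congr rfl; intro y _
    have h2 : E k y x = E k x y := by
      have hsym := hE.symm k hk
      calc E k y x = (E k)ᵀ x y := rfl
      _ = E k x y := by rw [hsym]
    rw [h2]
  have hsymq : ∀ j ≤ s, ∀ k ≤ s,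
      q 1 j k * Matrix.trace (E k) = q 1 k j * Matrix.trace (E j) := by
    intro j hj k hk
    have h1 := htr3 j hj k hk
    have h2 := htr3 k hk j hj
    rw [hKmul j hj k hk, Matrix.trace_smul, smul_eq_mul] at h1
    rw [hKmul k hk j hj, Matrix.trace_smul, smul_eq_mul] at h2
    have h3 : (∑ x : X, ∑ y : X, E 1 x y * E j x y * E k x y)
        = ∑ x : X, ∑ y : X, E 1 x y * E k x y * E j x y := by
      apply Finset.sum_congr rfl; intro x _
      apply Finset.sum_congr rfl; intro y _; ring
    have h4 := h1.trans (h3.trans h2.symm)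
    rw [mul_assoc, mul_assoc] at h4
    exact mul_left_cancel₀ (inv_ne_zero hnne) h4
  -- traces are positive
  have htr0 : Matrix.trace (E 0) = 1 := by
    have hJ : Matrix.trace (allOnes X) = (Fintype.card X : ℝ) := by
      simp [Matrix.trace, Matrix.diag, allOnes, Finset.sum_const, Finset.card_univ]
    rw [hE.zero_eq, Matrix.trace_smul, hJ, smul_eq_mul]
    exact inv_mul_cancel₀ hnne
  have htrpos : ∀ j, j ≤ s → 0 < Matrix.trace (E j) := by
    intro j
    induction j with
    | zero => intro _; rw [htr0]; norm_num
    | succ j ih =>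
      intro hj1
      have hj : j ≤ s := by omega
      have h := hsymq (j+1) hj1 j hj
      have hb : 0 < q 1 j (j+1) := hQ.1 j hj (j+1) hj1 (Or.inl rfl)
      have hc : 0 < q 1 (j+1) j := hQ.1 (j+1) hj1 j hj (Or.inr rfl)
      have hτ : 0 < q 1 (j+1) j * Matrix.trace (E j) := mul_pos hc (ih hj)
      rw [h] at hτ
      rcases mul_pos_iff.mp hτ with ⟨_, h5⟩ | ⟨h4, _⟩
      · exact h5
      · linarith
  -- the diagonal value q0 = vE 0 is positive
  have hvE0 : ∀ x : X, E 1 x x = vE 0 := fun x => by rw [hval1, hcls_diag]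
  have htrE1 : Matrix.trace (E 1) = (Fintype.card X : ℝ) * vE 0 := by
    rw [Matrix.trace]
    simp only [Matrix.diag]
    rw [Finset.sum_congr rfl fun x _ => hvE0 x, Finset.sum_const, Finset.card_univ, nsmul_eq_mul]
  have hq0 : 0 < vE 0 := by
    have h1 := htrpos 1 hs; rw [htrE1] at h1
    rcases mul_pos_iff.mp h1 with ⟨_, h5⟩ | ⟨h4, _⟩
    · exact h5
    · linarith
  have hq0ne : vE 0 ≠ 0 := ne_of_gt hq0
  -- E's are linearly independent, A's are in their span
  have hEne : ∀ j ≤ s, E j ≠ 0 := by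
    intro j hj hEj
    have := htrpos j hj
    rw [hEj, Matrix.trace_zero] at this
    exact lt_irrefl 0 this
  have hEind : LinearIndependent ℝ (fun j : Fin (s+1) => E (j : ℕ)) := by
    rw [Fintype.linearIndependent_iff]
    intro g hg j
    have h0 : (∑ i : Fin (s+1), g i • E (i:ℕ)) * E (j:ℕ) = 0 := by rw [hg, Matrix.zero_mul]
    rw [Finset.sum_mul] at h0
    have hcollapse : ∀ i : Fin (s+1), (g i • E (i:ℕ)) * E (j:ℕ)
        = if i = j then g j • E ((j:Fin (s+1)):ℕ) else 0 := by
      intro i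
      rw [Matrix.smul_mul, hE.orth_idem _ (Nat.lt_succ_iff.mp i.isLt) _ (Nat.lt_succ_iff.mp j.isLt)]
      by_cases h : i = j
      · subst h; rw [if_pos rfl, if_pos rfl]
      · rw [if_neg (fun hh => h (Fin.val_injective hh)), smul_zero, if_neg h]
    rw [Finset.sum_congr rfl (fun i _ => hcollapse i),
      Finset.sum_ite_eq' Finset.univ j _, if_pos (Finset.mem_univ j)] at h0
    rcases smul_eq_zero.mp h0 with h | h
    · exact h
    · exact absurd h (hEne _ (Nat.lt_succ_iff.mp j.isLt))
  have hAspan : ∀ i ≤ s, ∃ d : Fin (s+1) → ℝ, A i = ∑ j : Fin (s+1), d j • E (j:ℕ) := by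
    have hspan_le : Submodule.span ℝ (Set.range (fun j : Fin (s+1) => E (j:ℕ)))
        ≤ Submodule.span ℝ (Set.range (fun j : Fin (s+1) => A (j:ℕ))) := by
      rw [Submodule.span_le]
      rintro _ ⟨j, rfl⟩
      obtain ⟨qe, hqe⟩ := hE.mem_span (j:ℕ) (Nat.lt_succ_iff.mp j.isLt)
      have hmem2 : E (j:ℕ) ∈ Submodule.span ℝ (Set.range (fun j : Fin (s+1) => A (j:ℕ))) := by
        rw [hqe, Finset.sum_range (fun k => qe k • A k)]
        exact Submodule.sum_mem _ fun k _ =>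
          Submodule.smul_mem _ _ (Submodule.subset_span ⟨k, rfl⟩)
      exact hmem2
    have heq : Submodule.span ℝ (Set.range (fun j : Fin (s+1) => E (j:ℕ)))
        = Submodule.span ℝ (Set.range (fun j : Fin (s+1) => A (j:ℕ))) := by
      apply Submodule.eq_of_le_of_finrank_le hspan_le
      have hle1 : Module.finrank ℝ
          ↥(Submodule.span ℝ (Set.range (fun j : Fin (s+1) => A (j:ℕ)))) ≤ s + 1 := by
        have := finrank_range_le_card (R := ℝ) (fun j : Fin (s+1) => A (j:ℕ))
        simpa [Set.finrank] using this
      have heq1 : Module.finrank ℝ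
          ↥(Submodule.span ℝ (Set.range (fun j : Fin (s+1) => E (j:ℕ)))) = s + 1 := by
        rw [finrank_span_eq_card hEind, Fintype.card_fin]
      omega
    intro i hi
    have hmem : A i ∈ Submodule.span ℝ (Set.range fun j : Fin (s+1) => E (j:ℕ)) := by
      rw [heq]
      exact Submodule.subset_span ⟨⟨i, by omega⟩, rfl⟩
    rw [Submodule.mem_span_range_iff_exists_fun] at hmem
    obtain ⟨d, hd⟩ := hmem
    exact ⟨d, hd.symm⟩
  -- regularity: every class meets every row
  have hreg : ∀ i ≤ s, ∀ x : X, ∃ y, A i x y = 1 := by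
    intro i hi
    have hdiagconst : ∀ j ≤ s, ∀ x x' : X, (A i * A j) x x = (A i * A j) x' x' := by
      intro j hj x x'
      obtain ⟨p, hp⟩ := hA.mul_closed i hi j hj
      have h1 := hval_span _ _ hp
      rw [h1 x x, h1 x' x', hcls_diag, hcls_diag]
    have hrow : ∀ x : X, ∑ y, A i x y = (A i * (allOnes X)) x x := by
      intro x; rw [Matrix.mul_apply]; simp [allOnes]
    have hrowconst : ∀ x x' : X, ∑ y, A i x y = ∑ y, A i x' y := by
      intro x x'
      rw [hrow, hrow, ← hA.sum_eq, Matrix.mul_sum, Matrix.sum_apply, Matrix.sum_apply]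
      exact Finset.sum_congr rfl fun j hj =>
        hdiagconst j (Nat.lt_succ_iff.mp (Finset.mem_range.mp hj)) x x'
    have hex : ∃ x0 y0 : X, A i x0 y0 = 1 := by
      by_contra h; push_neg at h
      apply hA.nonempty i hi
      ext x y
      rw [Matrix.zero_apply]
      rcases hA01 i hi x y with h0|h1
      · exact h0
      · exact absurd h1 (h x y)
    obtain ⟨x0, y0, hx0⟩ := hex
    intro x
    by_contra h; push_neg at h
    have hzero : ∑ y, A i x y = 0 := Finset.sum_eq_zero fun y _ => by
      rcases hA01 i hi x y with h0|h1
      · exact h0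
      · exact absurd h1 (h y)
    have hone : (1:ℝ) ≤ ∑ y, A i x0 y := by
      have h7 := Finset.single_le_sum (f := fun y => A i x0 y)
        (fun y _ => hApos i hi x0 y) (Finset.mem_univ y0)
      simpa [hx0] using h7
    rw [hrowconst x x0] at hzero
    linarith
  have hclassrep : ∀ k ≤ s, ∃ x y : X, cls x y = k := by
    intro k hk
    obtain ⟨x0⟩ := hX
    obtain ⟨y, hy⟩ := hreg k hk x0
    exact ⟨x0, y, hcls_of hk hy⟩
  -- the Krein vanishing structure
  have hq_zero : ∀ j ≤ s, ∀ t ≤ s, t ≠ j-1 → t ≠ j+1 → q 1 j t = 0 := by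
    intro j hj t ht h1 h2
    rcases Nat.lt_trichotomy t j with h | heq | h
    · rcases Nat.lt_or_ge (t+1) j with hh | hh
      · exact hQ.2 j hj t ht (Or.inr hh)
      · exact absurd (by omega : t = j - 1) h1
    · rw [heq]; exact hbip j hj
    · rcases Nat.lt_or_ge (j+1) t with hh | hh
      · exact hQ.2 j hj t ht (Or.inl hh)
      · exact absurd (by omega : t = j + 1) h2
  have hKmid : ∀ j, 1 ≤ j → j + 1 ≤ s →
      Matrix.hadamard (E 1) (E j) = (Fintype.card X:ℝ)⁻¹ •
        (q 1 j (j-1) • E (j-1) + q 1 j (j+1) • E (j+1)) := by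
    intro j h1 h2
    rw [hK 1 hs j (by omega)]
    congr 1
    have hss : ∑ k ∈ Finset.range (s+1), q 1 j k • E k
        = ∑ k ∈ ({j-1, j+1} : Finset ℕ), q 1 j k • E k := by
      symm
      apply Finset.sum_subset
      · intro k hk; simp only [Finset.mem_insert, Finset.mem_singleton] at hk
        rcases hk with rfl|rfl <;> (rw [Finset.mem_range]; omega)
      · intro k hk hk2
        simp only [Finset.mem_insert, Finset.mem_singleton, not_or] at hk2
        rw [hq_zero j (by omega) k (Nat.lt_succ_iff.mp (Finset.mem_range.mp hk)) hk2.1 hk2.2,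
          zero_smul]
    rw [hss, Finset.sum_pair (by omega : j - 1 ≠ j + 1)]
  have hKtop : Matrix.hadamard (E 1) (E s)
      = (Fintype.card X:ℝ)⁻¹ • (q 1 s (s-1) • E (s-1)) := by
    rw [hK 1 hs s le_rfl]
    congr 1
    have hss : ∑ k ∈ Finset.range (s+1), q 1 s k • E k
        = ∑ k ∈ ({s-1} : Finset ℕ), q 1 s k • E k := by
      symm
      apply Finset.sum_subset
      · intro k hk; simp only [Finset.mem_singleton] at hk
        subst hk; rw [Finset.mem_range]; omega
      · intro k hk hk2
        simp only [Finset.mem_singleton] at hk2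
        have hk' : k ≤ s := Nat.lt_succ_iff.mp (Finset.mem_range.mp hk)
        rw [hq_zero s le_rfl k hk' hk2 (by omega), zero_smul]
    rw [hss, Finset.sum_singleton]
  -- the normalized values
  set σ : ℕ → ℝ := fun j => vE j / vE 0 with hσdef
  have hσ0 : σ 0 = 1 := div_self hq0ne
  -- notation for polynomials
  set bq : ℕ → ℝ := fun j => q 1 j (j+1) with hbqdef
  set cq : ℕ → ℝ := fun j => q 1 j (j-1) with hcqdef
  have hbqpos : ∀ j, j + 1 ≤ s → 0 < bq j := fun j hj =>
    hQ.1 j (by omega) (j+1) hj (Or.inl rfl)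
  set Φ : ℕ → Polynomial ℝ := phiP (Fintype.card X : ℝ) (vE 0) bq cq with hΦdef
  -- entrywise recurrence
  have hentry : ∀ j, 1 ≤ j → j+1 ≤ s → ∀ x y : X,
      E 1 x y * E j x y
        = (Fintype.card X:ℝ)⁻¹ * (cq j * E (j-1) x y + bq j * E (j+1) x y) := by
    intro j h1 h2 x y
    have h3 := congrFun (congrFun (hKmid j h1 h2) x) y
    simpa [Matrix.hadamard_apply, Matrix.smul_apply, Matrix.add_apply, smul_eq_mul,
      hbqdef, hcqdef, mul_add] using h3
  -- E j entries are polynomial values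
  have hphival : ∀ j, j ≤ s → ∀ x y : X,
      E j x y = Polynomial.eval (σ (cls x y)) (Φ j) := by
    intro j
    induction j using Nat.strong_induction_on with
    | _ j ih =>
      match j, ih with
      | 0, _ =>
        intro _ x y
        rw [hE.zero_eq]
        simp [allOnes, Matrix.smul_apply, smul_eq_mul, hΦdef, phiP]
      | 1, _ =>
        intro _ x y
        rw [hval1]
        simp only [hΦdef, phiP, Polynomial.eval_mul, Polynomial.eval_C, Polynomial.eval_X, hσdef]
        try field_simp
      | (j+2), ih =>
        intro hj x y
        have h1 : 1 ≤ j + 1 := by omega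
        have h2 : (j+1) + 1 ≤ s := by omega
        have he := hentry (j+1) h1 h2 x y
        have e1 := ih (j+1) (by omega) (by omega) x y
        have e0 := ih j (by omega) (by omega) x y
        have hE1 : E 1 x y = vE 0 * σ (cls x y) := by
          rw [hval1, hσdef]; field_simp
        have hb := hbqpos (j+1) h2
        have hbne : bq (j+1) ≠ 0 := ne_of_gt hb
        rw [show (j+1) - 1 = j by omega] at he
        have hsolve : E (j+2) x y
            = ((Fintype.card X:ℝ) * (E 1 x y * E (j+1) x y) - cq (j+1) * E j x y) / bq (j+1) := by
          rw [he]
          field_simp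
          try ring
        rw [hsolve, hE1, e1, e0]
        show _ = Polynomial.eval (σ (cls x y)) (phiP (Fintype.card X : ℝ) (vE 0) bq cq (j+2))
        rw [show phiP (Fintype.card X : ℝ) (vE 0) bq cq (j+2)
            = Polynomial.C ((Fintype.card X : ℝ) * (vE 0) / bq (j+1)) * Polynomial.X
              * phiP (Fintype.card X : ℝ) (vE 0) bq cq (j+1)
              - Polynomial.C (cq (j+1) / bq (j+1)) * phiP (Fintype.card X : ℝ) (vE 0) bq cq j
          from rfl]
        rw [Polynomial.eval_sub, Polynomial.eval_mul, Polynomial.eval_mul, Polynomial.eval_mul,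
          Polynomial.eval_C, Polynomial.eval_C, Polynomial.eval_X]
        rw [hΦdef]
        field_simp
  -- coefficients of Φ
  have hphicoeff : ∀ j, j ≤ s → 0 < (Φ j).coeff j
      ∧ (∀ k, j < k → (Φ j).coeff k = 0) ∧ (∀ k, k % 2 ≠ j % 2 → (Φ j).coeff k = 0) := by
    intro j
    induction j using Nat.strong_induction_on with
    | _ j ih =>
      match j, ih with
      | 0, _ =>
        intro _
        refine ⟨?_, ?_, ?_⟩
        · simp [hΦdef, phiP, Polynomial.coeff_C]
          positivity
        · intro k hk
          have hk0 : k ≠ 0 := by omega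
          simp [hΦdef, phiP, Polynomial.coeff_C, hk0]
        · intro k hk
          simp only [Nat.zero_mod] at hk
          have hk0 : k ≠ 0 := by omega
          simp [hΦdef, phiP, Polynomial.coeff_C, hk0]
      | 1, _ =>
        intro _
        refine ⟨?_, ?_, ?_⟩
        · simp [hΦdef, phiP, Polynomial.coeff_C_mul, Polynomial.coeff_X_one]
          exact hq0
        · intro k hk
          have hk0 : ¬ (1 = k) := by omega
          simp [hΦdef, phiP, Polynomial.coeff_C_mul, Polynomial.coeff_X, hk0]
        · intro k hk
          have hk0 : ¬ (1 = k) := by omega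
          simp [hΦdef, phiP, Polynomial.coeff_C_mul, Polynomial.coeff_X, hk0]
      | (j+2), ih =>
        intro hj
        obtain ⟨ht1, hb1, hp1⟩ := ih (j+1) (by omega) (by omega)
        obtain ⟨ht0, hb0, hp0⟩ := ih j (by omega) (by omega)
        have hb := hbqpos (j+1) (by omega)
        have hcoeff : ∀ k, (Φ (j+2)).coeff k
            = ((Fintype.card X : ℝ) * vE 0 / bq (j+1))
              * (if k = 0 then 0 else (Φ (j+1)).coeff (k-1))
              - (cq (j+1) / bq (j+1)) * (Φ j).coeff k := by
          intro k
          rw [hΦdef]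
          show (phiP (Fintype.card X : ℝ) (vE 0) bq cq (j+2)).coeff k = _
          rw [show phiP (Fintype.card X : ℝ) (vE 0) bq cq (j+2)
            = Polynomial.C ((Fintype.card X : ℝ) * (vE 0) / bq (j+1)) * Polynomial.X
              * phiP (Fintype.card X : ℝ) (vE 0) bq cq (j+1)
              - Polynomial.C (cq (j+1) / bq (j+1)) * phiP (Fintype.card X : ℝ) (vE 0) bq cq j
            from rfl]
          rw [Polynomial.coeff_sub, coeff_C_mul_X_mul, Polynomial.coeff_C_mul]
        refine ⟨?_, ?_, ?_⟩
        · rw [hcoeff (j+2)]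
          rw [if_neg (by omega : ¬ j + 2 = 0), (by omega : j + 2 - 1 = j + 1)]
          rw [hb0 (j+2) (by omega)]
          have hpos1 : 0 < (Fintype.card X : ℝ) * vE 0 / bq (j+1) := by positivity
          have := mul_pos hpos1 ht1
          linarith
        · intro k hk
          rw [hcoeff k]
          rw [if_neg (by omega : ¬ k = 0), hb1 (k-1) (by omega), hb0 k (by omega)]
          ring
        · intro k hk
          rw [hcoeff k]
          rcases Nat.eq_zero_or_pos k with rfl | hkpos
          · rw [if_pos rfl, hp0 0 (by omega)]
            ring
          · rw [if_neg (by omega : ¬ k = 0), hp1 (k-1) (by omega), hp0 k (by omega)]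
            ring
  -- the boundary polynomial Ψ
  set Ψ : Polynomial ℝ := Polynomial.C (vE 0) * Polynomial.X * Φ s
      - Polynomial.C ((Fintype.card X:ℝ)⁻¹ * q 1 s (s-1)) * Φ (s-1) with hΨdef
  have hΨeval : ∀ x y : X, Ψ.eval (σ (cls x y)) = 0 := by
    intro x y
    have h3 := congrFun (congrFun hKtop x) y
    simp only [Matrix.hadamard_apply, Matrix.smul_apply, smul_eq_mul] at h3
    have hE1 : E 1 x y = vE 0 * σ (cls x y) := by
      rw [hval1, hσdef]; field_simp
    rw [hΨdef]
    simp only [Polynomial.eval_sub, Polynomial.eval_mul, Polynomial.eval_C, Polynomial.eval_X]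
    rw [← hphival s le_rfl x y, ← hphival (s-1) (by omega) x y]
    rw [hE1] at h3
    rw [hphival s le_rfl x y] at h3
    rw [← hphival s le_rfl x y] at h3
    linarith [h3]
  have hΨσroot : ∀ k ≤ s, Ψ.eval (σ k) = 0 := by
    intro k hk
    obtain ⟨x, y, hxy⟩ := hclassrep k hk
    have := hΨeval x y
    rwa [hxy] at this
  have hΨtop : 0 < Ψ.coeff (s+1) := by
    rw [hΨdef]
    rw [Polynomial.coeff_sub, coeff_C_mul_X_mul, Polynomial.coeff_C_mul]
    rw [if_neg (by omega : ¬ s + 1 = 0), (by omega : s + 1 - 1 = s)]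
    rw [(hphicoeff (s-1) (by omega)).2.1 (s+1) (by omega)]
    have := (hphicoeff s le_rfl).1
    have h5 : 0 < vE 0 * (Φ s).coeff s := mul_pos hq0 this
    linarith
  have hΨne : Ψ ≠ 0 := by
    intro h
    rw [h, Polynomial.coeff_zero] at hΨtop
    exact lt_irrefl 0 hΨtop
  have hΨdeg : Ψ.natDegree ≤ s + 1 := by
    rw [Polynomial.natDegree_le_iff_coeff_eq_zero]
    intro N hN
    rw [hΨdef, Polynomial.coeff_sub, coeff_C_mul_X_mul, Polynomial.coeff_C_mul]
    rw [if_neg (by omega : ¬ N = 0), (hphicoeff s le_rfl).2.1 (N-1) (by omega),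
      (hphicoeff (s-1) (by omega)).2.1 N (by omega)]
    ring
  have hΨpar : ∀ k, k % 2 ≠ (s+1) % 2 → Ψ.coeff k = 0 := by
    intro k hk
    rw [hΨdef, Polynomial.coeff_sub, coeff_C_mul_X_mul, Polynomial.coeff_C_mul]
    rcases Nat.eq_zero_or_pos k with rfl | hkpos
    · rw [if_pos rfl, (hphicoeff (s-1) (by omega)).2.2 0 (by omega)]
      ring
    · rw [if_neg (by omega : ¬ k = 0), (hphicoeff s le_rfl).2.2 (k-1) (by omega),
        (hphicoeff (s-1) (by omega)).2.2 k (by omega)]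
      ring
  have hΨevalneg : ∀ t : ℝ, Ψ.eval (-t) = (-1:ℝ)^(s+1) * Ψ.eval t := by
    intro t
    rw [Polynomial.eval_eq_sum_range' (lt_of_le_of_lt hΨdeg (by omega : s+1 < s+2)) (-t),
      Polynomial.eval_eq_sum_range' (lt_of_le_of_lt hΨdeg (by omega : s+1 < s+2)) t,
      Finset.mul_sum]
    apply Finset.sum_congr rfl
    intro k _
    by_cases hck : Ψ.coeff k = 0
    · rw [hck]; ring
    · have hpar : k % 2 = (s+1) % 2 := by
        by_contra h
        exact hck (hΨpar k h)
      have hsgn : (-1:ℝ)^k = (-1:ℝ)^(s+1) := by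
        rcases Nat.even_or_odd k with he | ho
        · have h1 : Even (s+1) := by
            rw [Nat.even_iff] at he ⊢; omega
          rw [he.neg_one_pow, h1.neg_one_pow]
        · have h1 : Odd (s+1) := by
            rw [Nat.odd_iff] at ho ⊢; omega
          rw [ho.neg_one_pow, h1.neg_one_pow]
      rw [neg_pow, hsgn]
      ring
  -- distinctness of the values σ
  have hσinj : ∀ k ≤ s, ∀ l ≤ s, σ k = σ l → k = l := by
    intro k hk l hl hσe
    by_contra hne
    obtain ⟨x, y, hxy⟩ := hclassrep k hk
    obtain ⟨x', y', hxy'⟩ := hclassrep l hl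
    have hEeq : ∀ j ≤ s, E j x y = E j x' y' := by
      intro j hj
      rw [hphival j hj, hphival j hj, hxy, hxy', hσe]
    obtain ⟨d, hd⟩ := hAspan k hk
    have hv : A k x y = A k x' y' := by
      rw [hd, Matrix.sum_apply, Matrix.sum_apply]
      refine Finset.sum_congr rfl fun j _ => ?_
      rw [Matrix.smul_apply, Matrix.smul_apply, hEeq (j:ℕ) (Nat.lt_succ_iff.mp j.isLt)]
    have h1 : A k x y = 1 := by rw [← hxy]; exact hclsA x y
    have h0 : A k x' y' = 0 := hAoff k hk x' y' (by rw [hxy']; exact fun h => hne h)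
    rw [h1, h0] at hv
    norm_num at hv
  -- roots of Ψ are exactly the values σ
  have hSfin : ((Finset.range (s+1)).image σ).card = s + 1 := by
    rw [Finset.card_image_of_injOn, Finset.card_range]
    intro k hk l hl h
    simp only [Finset.coe_range, Set.mem_Iio] at hk hl
    exact hσinj k (by omega) l (by omega) h
  have hsub : (Finset.range (s+1)).image σ ⊆ Ψ.roots.toFinset := by
    intro t ht
    obtain ⟨k, hk, rfl⟩ := Finset.mem_image.mp ht
    rw [Multiset.mem_toFinset, Polynomial.mem_roots']
    exact ⟨hΨne, hΨσroot k (Nat.lt_succ_iff.mp (Finset.mem_range.mp hk))⟩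
  have hSeq : (Finset.range (s+1)).image σ = Ψ.roots.toFinset := by
    apply Finset.eq_of_subset_of_card_le hsub
    calc Ψ.roots.toFinset.card ≤ Multiset.card Ψ.roots := Multiset.toFinset_card_le _
    _ ≤ Ψ.natDegree := Polynomial.card_roots' Ψ
    _ ≤ s + 1 := hΨdeg
    _ = ((Finset.range (s+1)).image σ).card := hSfin.symm
  have hrootmem : ∀ t : ℝ, Ψ.eval t = 0 → ∃ k, k ≤ s ∧ σ k = t := by
    intro t ht
    have : t ∈ Ψ.roots.toFinset := by
      rw [Multiset.mem_toFinset, Polynomial.mem_roots']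
      exact ⟨hΨne, ht⟩
    rw [← hSeq] at this
    obtain ⟨k, hk, hkt⟩ := Finset.mem_image.mp this
    exact ⟨k, Nat.lt_succ_iff.mp (Finset.mem_range.mp hk), hkt⟩
  have hneg : ∀ k ≤ s, ∃ k', k' ≤ s ∧ σ k' = -σ k := by
    intro k hk
    obtain ⟨k', h1, h2⟩ := hrootmem (-σ k) (by rw [hΨevalneg, hΨσroot k hk]; ring)
    exact ⟨k', h1, h2⟩
  obtain ⟨istar, histarle, hσistar⟩ : ∃ i, i ≤ s ∧ σ i = -1 := by
    apply hrootmem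
    have h1 : Ψ.eval 1 = 0 := by
      have := hΨσroot 0 (Nat.zero_le _)
      rwa [hσ0] at this
    have h2 := hΨevalneg 1
    rw [h1] at h2
    simpa using h2
  have histar0 : istar ≠ 0 := by
    intro h; rw [h, hσ0] at hσistar; norm_num at hσistar
  -- the Euclidean embedding
  set m := (E 1).rank with hmdef
  set u : X → EuclideanSpace ℝ X := fun x => (WithLp.equiv 2 (X → ℝ)).symm ((E 1)ᵀ x) with hudef
  have hinner_u : ∀ x y : X, (inner ℝ (u x) (u y) : ℝ) = E 1 x y := by
    intro x y
    rw [PiLp.inner_apply]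
    simp only [RCLike.inner_apply, conj_trivial]
    have h1 : ∀ z, u x z = E 1 z x := fun z => rfl
    have h2 : ∀ z, u y z = E 1 z y := fun z => rfl
    have hsym := hE.symm 1 hs
    have h3 : ∑ z, u x z * u y z = (E 1 * E 1) x y := by
      rw [Matrix.mul_apply]
      apply Finset.sum_congr rfl
      intro z _
      rw [h1, h2]
      have : E 1 x z = E 1 z x := by
        calc E 1 x z = (E 1)ᵀ z x := rfl
        _ = E 1 z x := by rw [hsym]
      rw [this]
    rw [show (∑ z, u y z * u x z) = ∑ z, u x z * u y z from Finset.sum_congr rfl fun z _ => mul_comm _ _,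
      h3, hE.orth_idem 1 hs 1 hs, if_pos rfl]
  have hVfin : FiniteDimensional ℝ ↥(Submodule.span ℝ (Set.range u)) :=
    FiniteDimensional.span_of_finite ℝ (Set.finite_range u)
  have hVrank : Module.finrank ℝ ↥(Submodule.span ℝ (Set.range u)) = m := by
    rw [hmdef, Matrix.rank_eq_finrank_span_cols]
    have h1 : Set.range u
        = ⇑((WithLp.linearEquiv 2 ℝ (X → ℝ)).symm.toLinearMap) '' (Set.range (E 1).col) := by
      rw [← Set.range_comp]; rfl
    rw [h1, ← Submodule.map_span]
    exact LinearEquiv.finrank_map_eq _ _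
  set V := Submodule.span ℝ (Set.range u) with hVdef
  have hmemV : ∀ x, u x ∈ V := fun x => Submodule.subset_span (Set.mem_range_self x)
  set b : OrthonormalBasis (Fin m) ℝ ↥V := (stdOrthonormalBasis ℝ ↥V).reindex
    (finCongr hVrank) with hbdef
  set c : X → Fin m → ℝ := fun x i => Real.sqrt (vE 0)⁻¹ * (inner ℝ ((b i : ↥V) : EuclideanSpace ℝ X) (u x) : ℝ) with hcdef
  have hcsum : ∀ x y : X, ∑ i, c x i * c y i = σ (cls x y) := by
    intro x y
    have hux : (⟨u x, hmemV x⟩ : ↥V) = ⟨u x, hmemV x⟩ := rfl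
    have hsum : ∑ i, (inner ℝ ((b i : ↥V) : EuclideanSpace ℝ X) (u x) : ℝ)
        * (inner ℝ ((b i : ↥V) : EuclideanSpace ℝ X) (u y) : ℝ) = E 1 x y := by
      have h4 : ∀ i, (inner ℝ ((b i : ↥V) : EuclideanSpace ℝ X) (u x) : ℝ)
          = (inner ℝ (⟨u x, hmemV x⟩ : ↥V) (b i) : ℝ) := by
        intro i
        rw [Submodule.coe_inner]
        exact real_inner_comm _ _
      have h5 : ∀ i, (inner ℝ ((b i : ↥V) : EuclideanSpace ℝ X) (u y) : ℝ)
          = (inner ℝ (b i) (⟨u y, hmemV y⟩ : ↥V) : ℝ) := by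
        intro i
        rw [Submodule.coe_inner]
      calc ∑ i, (inner ℝ ((b i : ↥V) : EuclideanSpace ℝ X) (u x) : ℝ)
            * (inner ℝ ((b i : ↥V) : EuclideanSpace ℝ X) (u y) : ℝ)
          = ∑ i, (inner ℝ (⟨u x, hmemV x⟩ : ↥V) (b i) : ℝ)
            * (inner ℝ (b i) (⟨u y, hmemV y⟩ : ↥V) : ℝ) := by
            apply Finset.sum_congr rfl
            intro i _
            rw [h4, h5]
      _ = (inner ℝ (⟨u x, hmemV x⟩ : ↥V) (⟨u y, hmemV y⟩ : ↥V) : ℝ) :=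
          b.sum_inner_mul_inner _ _
      _ = (inner ℝ (u x) (u y) : ℝ) := by rw [Submodule.coe_inner]
      _ = E 1 x y := hinner_u x y
    have hsq : (Real.sqrt (vE 0)⁻¹)^2 = (vE 0)⁻¹ :=
      Real.sq_sqrt (by positivity)
    calc ∑ i, c x i * c y i
        = (Real.sqrt (vE 0)⁻¹)^2 * ∑ i, (inner ℝ ((b i : ↥V) : EuclideanSpace ℝ X) (u x) : ℝ)
          * (inner ℝ ((b i : ↥V) : EuclideanSpace ℝ X) (u y) : ℝ) := by
          rw [Finset.mul_sum]
          apply Finset.sum_congr rfl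
          intro i _
          rw [hcdef]
          ring
    _ = (vE 0)⁻¹ * E 1 x y := by rw [hsq, hsum]
    _ = σ (cls x y) := by rw [hval1, hσdef]; field_simp
  have hnorm : ∀ x : X, ∑ i, (c x i)^2 = 1 := by
    intro x
    have h1 : ∑ i, (c x i)^2 = ∑ i, c x i * c x i := by
      apply Finset.sum_congr rfl; intro i _; ring
    rw [h1, hcsum, hcls_diag, hσ0]
  -- the antipodal matching
  have hneg_of : ∀ x y : X, cls x y = istar → ∀ i, c y i = - c x i := by
    intro x y hxy
    have h1 : ∑ i, (c x i + c y i)^2 = 0 := by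
      have e1 := hnorm x
      have e2 := hnorm y
      have e3 := hcsum x y
      rw [hxy, hσistar] at e3
      have h2 : ∑ i, (c x i + c y i)^2
          = (∑ i, (c x i)^2) + (∑ i, (c y i)^2) + 2 * ∑ i, c x i * c y i := by
        rw [Finset.mul_sum, ← Finset.sum_add_distrib, ← Finset.sum_add_distrib]
        apply Finset.sum_congr rfl; intro i _; ring
      rw [h2, e1, e2, e3]; ring
    intro i
    have h3 := (Finset.sum_eq_zero_iff_of_nonneg (fun i _ => sq_nonneg _)).mp h1 i (Finset.mem_univ i)
    have h4 : c x i + c y i = 0 := by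
      have := sq_eq_zero_iff.mp h3
      exact this
    linarith
  have hinner_one : ∀ x y : X, ∑ i, c x i * c y i = 1 → x = y := by
    intro x y h
    have h1 := hcsum x y
    rw [h] at h1
    exact hcls_eq_zero x y (hσinj _ (hclsle x y) 0 (Nat.zero_le _) (by rw [← h1, hσ0]))
  have hmtE : ∀ x : X, ∃ y, cls x y = istar := by
    intro x
    obtain ⟨y, hy⟩ := hreg istar histarle x
    exact ⟨y, hcls_of histarle hy⟩
  choose mt hmt using hmtE
  have hmt_uniq : ∀ x y : X, cls x y = istar → y = mt x := by
    intro x y h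
    have h1 := hneg_of x y h
    have h2 := hneg_of x (mt x) (hmt x)
    apply hinner_one y (mt x)
    have hstep : ∑ i, c y i * c (mt x) i = ∑ i, (c x i)^2 := by
      apply Finset.sum_congr rfl
      intro i _
      rw [h1 i, h2 i]
      ring
    rw [hstep]
    exact hnorm x
  have hmt_ne : ∀ x : X, mt x ≠ x := by
    intro x h
    have h1 := hmt x
    rw [h, hcls_diag] at h1
    exact histar0 h1.symm
  have hmt_invol : ∀ x : X, mt (mt x) = x := by
    intro x
    symm
    apply hmt_uniq (mt x) x
    rw [hcls_symm]
    exact hmt x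
  -- the half set
  set e : X ≃ Fin (Fintype.card X) := Fintype.equivFin X with hedef
  set Y : Finset X := Finset.univ.filter (fun x => e x < e (mt x)) with hYdef
  have hYcard : Fintype.card X = 2 * Y.card := by
    have hsplit := Finset.card_filter_add_card_filter_not
      (s := (Finset.univ : Finset X)) (p := fun x => e x < e (mt x))
    have hYc : Finset.univ.filter (fun x : X => ¬ e x < e (mt x)) = Y.image mt := by
      ext z
      simp only [Finset.mem_filter, Finset.mem_univ, true_and, Finset.mem_image, not_lt]
      constructor
      · intro h
        refine ⟨mt z, ?_, hmt_invol z⟩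
        rw [hYdef]
        simp only [Finset.mem_filter, Finset.mem_univ, true_and, hmt_invol]
        have hne : e (mt z) ≠ e z := fun hh => hmt_ne z (e.injective hh)
        exact lt_of_le_of_ne h hne
      · rintro ⟨w, hw, rfl⟩
        rw [hYdef] at hw
        simp only [Finset.mem_filter, Finset.mem_univ, true_and] at hw
        rw [hmt_invol]
        exact le_of_lt hw
    have himg : (Y.image mt).card = Y.card :=
      Finset.card_image_of_injective _ (Function.Involutive.injective hmt_invol)
    rw [hYc, himg, Finset.card_univ] at hsplit
    rw [hYdef] at hsplit ⊢
    omega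
  -- the inner product value set
  set Bf : Finset ℝ := (((Finset.range (s+1)).erase istar).erase 0).image σ with hBfdef
  have hmem_er : ∀ k, k ∈ ((Finset.range (s+1)).erase istar).erase 0 ↔
      (k ≠ 0 ∧ k ≠ istar ∧ k ≤ s) := by
    intro k
    simp only [Finset.mem_erase, Finset.mem_range]
    omega
  have hBcard : Bf.card = s - 1 := by
    rw [hBfdef, Finset.card_image_of_injOn, Finset.card_erase_of_mem, Finset.card_erase_of_mem,
      Finset.card_range]
    · omega
    · rw [Finset.mem_range]; omega
    · rw [Finset.mem_erase]
      exact ⟨Ne.symm histar0, Finset.mem_range.mpr (by omega)⟩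
    · intro k hk l hl h
      rw [Finset.mem_coe, hmem_er] at hk hl
      exact hσinj k hk.2.2 l hl.2.2 h
  have hBsymm : ∀ β ∈ Bf, -β ∈ Bf := by
    intro β hβ
    rw [hBfdef] at hβ ⊢
    obtain ⟨k, hk, rfl⟩ := Finset.mem_image.mp hβ
    rw [hmem_er] at hk
    obtain ⟨k', hk'le, hk'⟩ := hneg k hk.2.2
    rw [← hk']
    apply Finset.mem_image_of_mem
    rw [hmem_er]
    refine ⟨?_, ?_, hk'le⟩
    · intro h
      rw [h, hσ0] at hk'
      have : σ k = -1 := by linarith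
      rw [← hσistar] at this
      exact hk.2.1 (hσinj k hk.2.2 istar histarle this)
    · intro h
      rw [h, hσistar] at hk'
      have : σ k = 1 := by linarith
      rw [← hσ0] at this
      exact hk.1 (hσinj k hk.2.2 0 (Nat.zero_le _) this)
  have h1B : (1:ℝ) ∉ Bf := by
    intro h
    rw [hBfdef] at h
    obtain ⟨k, hk, hk1⟩ := Finset.mem_image.mp h
    rw [hmem_er] at hk
    exact hk.1 (hσinj k hk.2.2 0 (Nat.zero_le _) (by rw [hσ0]; exact hk1))
  have hBmem_cls : ∀ x y : X, x ≠ y → y ≠ mt x → σ (cls x y) ∈ Bf := by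
    intro x y hxy hymt
    rw [hBfdef]
    apply Finset.mem_image_of_mem
    rw [hmem_er]
    refine ⟨?_, ?_, hclsle x y⟩
    · intro h; exact hxy (hcls_eq_zero x y h)
    · intro h; exact hymt (hmt_uniq x y h)
  -- the interpolation argument
  have hYlt : ∀ x ∈ Y, e x < e (mt x) := by
    intro x hx
    rw [hYdef, Finset.mem_filter] at hx
    exact hx.2
  obtain ⟨a, ha1, ha2, ha3⟩ := symm_prod_expand Bf.card Bf rfl hBsymm
  have hspan_top : Submodule.span ℝ
      (Set.range (monF (fun z : ↥Y => c (z:X)) (k := s-1))) = ⊤ := by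
    rw [Submodule.eq_top_iff']
    intro g
    have hδ : ∀ z : ↥Y, (Pi.single z 1 : ↥Y → ℝ) ∈ Submodule.span ℝ
        (Set.range (monF (fun z : ↥Y => c (z:X)) (k := s-1))) := by
      intro z
      set f : ↥Y → ℝ := fun w => ∏ β ∈ Bf, ((∑ i, c (z:X) i * c (w:X) i) - β) with hfdef
      have hfmem : f ∈ Submodule.span ℝ
          (Set.range (monF (fun z : ↥Y => c (z:X)) (k := s-1))) := by
        have hfeq : f = ∑ k ∈ Finset.range (Bf.card + 1),
            a k • (fun w : ↥Y => (∑ i, c (z:X) i * c (w:X) i)^k) := by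
          funext w
          rw [hfdef]
          show ∏ β ∈ Bf, ((∑ i, c (z:X) i * c (w:X) i) - β) = _
          rw [ha3, Finset.sum_apply]
          apply Finset.sum_congr rfl
          intro k _
          rw [Pi.smul_apply, smul_eq_mul]
        rw [hfeq]
        apply Submodule.sum_mem
        intro k hk
        by_cases hak : a k = 0
        · rw [hak, zero_smul]; exact Submodule.zero_mem _
        · apply Submodule.smul_mem
          have hk1 : k ≤ Bf.card := by
            by_contra hh; exact hak (ha1 k (by omega))
          have hk2 : k % 2 = Bf.card % 2 := by
            by_contra hh; exact hak (ha2 k hh)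
          rw [hBcard] at hk1 hk2
          exact pow_lin_mem_pad (fun z : ↥Y => c (z:X)) (fun w => hnorm (w:X))
            (c (z:X)) hk1 hk2
      have hGzz : (∑ i, c (z:X) i * c (z:X) i) = 1 := by
        rw [← hnorm (z:X)]
        apply Finset.sum_congr rfl; intro i _; ring
      have hfznz : f z ≠ 0 := by
        rw [hfdef]
        simp only
        rw [hGzz]
        apply Finset.prod_ne_zero_iff.mpr
        intro β hβ h
        apply h1B
        have hβ1 : β = 1 := by linarith
        rwa [← hβ1]
      have hfoff : ∀ w : ↥Y, w ≠ z → f w = 0 := by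
        intro w hw
        have hzw : (z:X) ≠ (w:X) := fun h => hw (Subtype.ext h.symm)
        have hwmt : (w:X) ≠ mt (z:X) := by
          intro h
          have hzY := hYlt (z:X) z.2
          have hwY := hYlt (w:X) w.2
          rw [h, hmt_invol] at hwY
          exact absurd (hzY.trans hwY) (lt_irrefl _)
        have hmem := hBmem_cls (z:X) (w:X) hzw hwmt
        rw [hfdef]
        apply Finset.prod_eq_zero hmem
        rw [hcsum]
        exact sub_self _
      have hsingle : (Pi.single z 1 : ↥Y → ℝ) = (f z)⁻¹ • f := by
        funext w
        by_cases hw : w = z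
        · subst hw
          rw [Pi.single_eq_same, Pi.smul_apply, smul_eq_mul, inv_mul_cancel₀ hfznz]
        · rw [Pi.single_eq_of_ne hw, Pi.smul_apply, smul_eq_mul, hfoff w hw, mul_zero]
      rw [hsingle]
      exact Submodule.smul_mem _ _ hfmem
    have hgeq : g = ∑ z : ↥Y, g z • (Pi.single z 1 : ↥Y → ℝ) := by
      refine (Finset.univ_sum_single g).symm.trans ?_
      apply Finset.sum_congr rfl
      intro z _
      rw [← Pi.single_smul, smul_eq_mul, mul_one]
    rw [hgeq]
    exact Submodule.sum_mem _ fun z _ => Submodule.smul_mem _ _ (hδ z)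
  have hfin : Y.card ≤ Fintype.card (Sym (Fin m) (s-1)) := by
    have h1 := finrank_le_of_span_eq_top hspan_top
    rw [Module.finrank_pi ℝ, Fintype.card_coe] at h1
    exact h1
  have hsymcard : Fintype.card (Sym (Fin m) (s-1)) = (m + s - 2).choose (s-1) := by
    have harg : m + (s-1) - 1 = m + s - 2 := by omega
    rw [Sym.card_sym_eq_multichoose, Nat.multichoose_eq, Fintype.card_fin, harg]
  rw [hYcard]
  rw [hsymcard] at hfin
  omega
end
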